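/- arXiv:1101.4889 — 7 statements merged into one kernel-verified Lean document; each statement's English description precedes it below -/
import Mathlib

section
/- A generalized quantum N-instrument {T_i}_{i=1}^M on ℋ_{2N−1}⊗…⊗ℋ₀ is extremal if and only if the following holds: whenever D_1,…,D_M are Hermitian operators on ℋ_{2N−1}⊗…⊗ℋ₀ with supp(D_i) ⊆ supp(T_i) for every i, and the sum ∑_{i=1}^M D_i belongs to the real linear span of the set {R − R′ : R, R′ deterministic quantum N-combs}, then D_i = 0 for all i. -/
open Matrix
open scoped ComplexOrder

/-- Operators on the tensor product `ℋ_{m-1} ⊗ ⋯ ⊗ ℋ₀` of the first `m` Hilbert spaces,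
where `ℋ_k = ℂ^(d k)`. -/
abbrev CombMat (d : ℕ → ℕ) (m : ℕ) :=
  Matrix (∀ k : Fin m, Fin (d k)) (∀ k : Fin m, Fin (d k)) ℂ

/-- Partial trace over the last (highest-numbered) Hilbert space. -/
noncomputable def ptrTop {d : ℕ → ℕ} {m : ℕ} (A : CombMat d (m + 1)) : CombMat d m :=
  fun i j => ∑ x : Fin (d m), A (Fin.snoc i x) (Fin.snoc j x)

/-- Tensoring with the identity on a new highest-numbered Hilbert space:
`I_m ⊗ B`. -/
noncomputable def tensTop {d : ℕ → ℕ} {m : ℕ} (B : CombMat d m) : CombMat d (m + 1) :=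
  fun i j => (if i (Fin.last m) = j (Fin.last m) then 1 else 0) * B (Fin.init i) (Fin.init j)


section PartA
variable {ι : Type*} [Fintype ι] [DecidableEq ι]
set_option linter.unusedSectionVars false

lemma aux_herm_dot_swap {M : Matrix ι ι ℂ} (hM : M.IsHermitian) (v w : ι → ℂ) :
    star v ⬝ᵥ (M *ᵥ w) = star (M *ᵥ v) ⬝ᵥ w := by
  rw [star_mulVec, hM.eq, ← dotProduct_mulVec]

lemma aux_psd_mulVec_zero {A : Matrix ι ι ℂ} (hA : A.PosSemidef) (x : ι → ℂ)
    (h : star x ⬝ᵥ (A *ᵥ x) = 0) : A *ᵥ x = 0 := by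
  exact (hA.dotProduct_mulVec_zero_iff x).mp h

lemma aux_psd_smul_real {A : Matrix ι ι ℂ} (hA : A.PosSemidef) {r : ℝ} (hr : 0 ≤ r) :
    (r • A).PosSemidef := by
  refine Matrix.PosSemidef.of_dotProduct_mulVec_nonneg (Matrix.ext fun i j => ?_) fun x => ?_
  · simp only [conjTranspose_apply, Matrix.smul_apply, star_smul, star_trivial]
    rw [hA.1.apply]
  · rw [smul_mulVec, dotProduct_smul]
    have h0 := hA.dotProduct_mulVec_nonneg x
    rw [Complex.real_smul]
    exact mul_nonneg (by exact_mod_cast Complex.zero_le_real.mpr hr) h0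

lemma aux_ker_le_ker {A T : Matrix ι ι ℂ} (hA : A.IsHermitian) (hT : T.IsHermitian)
    (h : LinearMap.range A.mulVecLin ≤ LinearMap.range T.mulVecLin) :
    ∀ x, T *ᵥ x = 0 → A *ᵥ x = 0 := by
  intro x hx
  have hAu : ∀ u, star x ⬝ᵥ (A *ᵥ u) = 0 := by
    intro u
    obtain ⟨w, hw⟩ := h (LinearMap.mem_range_self A.mulVecLin u)
    have hw' : T *ᵥ w = A *ᵥ u := hw
    rw [← hw', aux_herm_dot_swap hT, hx]
    simp
  have := hAu (A *ᵥ x)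
  rw [aux_herm_dot_swap hA, dotProduct_star_self_eq_zero] at this
  exact this

lemma aux_range_le_range_add {A B : Matrix ι ι ℂ} (hA : A.PosSemidef) (hB : B.PosSemidef) :
    LinearMap.range A.mulVecLin ≤ LinearMap.range (A + B).mulVecLin := by
  set S := A + B with hSdef
  have hS : S.PosSemidef := hA.add hB
  have hker : ∀ x, S *ᵥ x = 0 → A *ᵥ x = 0 := by
    intro x hx
    have h0 : star x ⬝ᵥ (A *ᵥ x) + star x ⬝ᵥ (B *ᵥ x) = 0 := by
      rw [← dotProduct_add, ← add_mulVec, ← hSdef, hx, dotProduct_zero]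
    have hA2 := hA.dotProduct_mulVec_nonneg x
    have hB2 := hB.dotProduct_mulVec_nonneg x
    have hA0 : star x ⬝ᵥ (A *ᵥ x) = 0 := by
      refine le_antisymm ?_ hA2
      calc star x ⬝ᵥ (A *ᵥ x) ≤ star x ⬝ᵥ (A *ᵥ x) + star x ⬝ᵥ (B *ᵥ x) :=
            le_add_of_nonneg_right hB2
        _ = 0 := h0
    exact aux_psd_mulVec_zero hA x hA0
  have htop : LinearMap.range S.mulVecLin ⊔ LinearMap.ker S.mulVecLin = ⊤ := by
    have hinf : LinearMap.range S.mulVecLin ⊓ LinearMap.ker S.mulVecLin = ⊥ := by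
      rw [eq_bot_iff]
      rintro z ⟨⟨w, rfl⟩, hzk⟩
      have hzk' : S *ᵥ (S *ᵥ w) = 0 := hzk
      have : star (S *ᵥ w) ⬝ᵥ (S *ᵥ w) = 0 := by
        rw [aux_herm_dot_swap hS.1, hzk']; simp
      rw [dotProduct_star_self_eq_zero] at this
      simp [Matrix.mulVecLin_apply, this]
    have h1 := Submodule.finrank_sup_add_finrank_inf_eq
      (LinearMap.range S.mulVecLin) (LinearMap.ker S.mulVecLin)
    rw [hinf, finrank_bot, add_zero, LinearMap.finrank_range_add_finrank_ker] at h1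
    exact Submodule.eq_top_of_finrank_eq h1
  rintro v ⟨u, rfl⟩
  have hv : A.mulVecLin u ∈ (⊤ : Submodule ℂ (ι → ℂ)) := Submodule.mem_top
  rw [← htop] at hv
  obtain ⟨p, hp, k, hk, hpk⟩ := Submodule.mem_sup.mp hv
  obtain ⟨w, rfl⟩ := hp
  have hkk : S *ᵥ k = 0 := hk
  have hAk : A *ᵥ k = 0 := hker k hkk
  have hk0 : k = 0 := by
    have h1 : star k ⬝ᵥ (A *ᵥ u) = 0 := by
      rw [aux_herm_dot_swap hA.1, hAk]; simp
    have h2 : star k ⬝ᵥ (S *ᵥ w) = 0 := by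
      rw [aux_herm_dot_swap hS.1, hkk]; simp
    have h3 : star k ⬝ᵥ k = 0 := by
      have : (A.mulVecLin u : ι → ℂ) = S *ᵥ w + k := by rw [← hpk]; rfl
      have h4 : star k ⬝ᵥ (A *ᵥ u) = star k ⬝ᵥ (S *ᵥ w) + star k ⬝ᵥ k := by
        rw [show (A *ᵥ u : ι → ℂ) = S *ᵥ w + k from this, dotProduct_add]
      rw [h1, h2, zero_add] at h4
      exact h4.symm
    exact dotProduct_star_self_eq_zero.mp h3
  refine ⟨w, ?_⟩
  rw [← hpk, hk0, add_zero]

lemma aux_range_smul {a : ℝ} (ha : a ≠ 0) (M : Matrix ι ι ℂ) :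
    LinearMap.range (a • M).mulVecLin = LinearMap.range M.mulVecLin := by
  apply le_antisymm
  · rintro v ⟨u, rfl⟩
    exact ⟨a • u, by simp [Matrix.mulVecLin_apply, mulVec_smul, smul_mulVec]⟩
  · rintro v ⟨u, rfl⟩
    refine ⟨a⁻¹ • u, ?_⟩
    simp only [Matrix.mulVecLin_apply, mulVec_smul, smul_mulVec]
    rw [smul_smul, inv_mul_cancel₀ ha, one_smul]

end PartA



section PartE
variable {ι : Type*} [Fintype ι] [DecidableEq ι]
set_option linter.unusedSectionVars false
set_option maxHeartbeats 1000000

lemma aux_herm_dot_real {M : Matrix ι ι ℂ} (hM : M.IsHermitian) (x : ι → ℂ) :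
    star (star x ⬝ᵥ (M *ᵥ x)) = star x ⬝ᵥ (M *ᵥ x) := by
  conv_lhs => rw [star_dotProduct, star_star]
  exact (aux_herm_dot_swap hM x x).symm

lemma aux_herm_smul_real {M : Matrix ι ι ℂ} (hM : M.IsHermitian) (c : ℝ) :
    (c • M).IsHermitian := by
  refine Matrix.ext fun i j => ?_
  simp only [conjTranspose_apply, Matrix.smul_apply, star_smul, star_trivial]
  rw [hM.apply]

lemma aux_exists_eps {T D : Matrix ι ι ℂ} (hT : T.PosSemidef) (hD : D.IsHermitian)
    (hker : ∀ x, T *ᵥ x = 0 → D *ᵥ x = 0) :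
    ∃ ε : ℝ, 0 < ε ∧ ∀ c : ℝ, |c| ≤ ε → (T + c • D).PosSemidef := by
  classical
  by_cases hD0 : D = 0
  · exact ⟨1, one_pos, fun c _ => by simpa [hD0] using hT⟩
  have hH : T.IsHermitian := hT.1
  set V : Matrix ι ι ℂ := (hH.eigenvectorUnitary : Matrix ι ι ℂ) with hV
  have hVV : V * star V = 1 := mem_unitaryGroup_iff.mp hH.eigenvectorUnitary.2
  have hVV' : star V * V = 1 := mem_unitaryGroup_iff'.mp hH.eigenvectorUnitary.2
  set lam := hH.eigenvalues with hlamdef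
  have hlam : ∀ i, 0 ≤ lam i := hT.eigenvalues_nonneg
  have hspec : T = V * diagonal (RCLike.ofReal ∘ lam) * star V := hH.spectral_theorem
  set Dt := star V * D * V with hDt
  have hDtH : Dt.IsHermitian := by
    unfold Matrix.IsHermitian
    rw [hDt]
    simp only [conjTranspose_mul, star_eq_conjTranspose, conjTranspose_conjTranspose, hD.eq]
    rw [Matrix.mul_assoc]
  have hcol : ∀ i j, lam j = 0 → Dt i j = 0 := by
    intro i j hj
    have hTu : T *ᵥ (fun k => V k j) = 0 := by
      have hu : (fun k => V k j) = V *ᵥ Pi.single j 1 := by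
        funext k; simp [mulVec_single]
      rw [hu, hspec, mulVec_mulVec, Matrix.mul_assoc (V * diagonal (RCLike.ofReal ∘ lam)) _ _,
        hVV']
      rw [Matrix.mul_one, ← mulVec_mulVec, diagonal_mulVec_single]
      have : (RCLike.ofReal ∘ lam) j * 1 = (0 : ℂ) := by simp [hj]
      rw [this]
      simp
    have hDu : D *ᵥ (fun k => V k j) = 0 := hker _ hTu
    have hDV : ∀ k, (D * V) k j = 0 := by
      intro k
      have := congrFun hDu k
      simpa [Matrix.mul_apply, mulVec, dotProduct] using this
    rw [hDt, Matrix.mul_assoc, Matrix.mul_apply]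
    exact Finset.sum_eq_zero fun k _ => by rw [hDV k, mul_zero]
  have hrow : ∀ i j, lam i = 0 → Dt i j = 0 := by
    intro i j hi
    rw [← hDtH.apply i j, hcol j i hi, star_zero]
  set C := ∑ i, ∑ j, ‖Dt i j‖ with hC
  have hC0 : 0 ≤ C :=
    Finset.sum_nonneg fun i _ => Finset.sum_nonneg fun j _ => norm_nonneg _
  set Sf : Finset ι := Finset.univ.filter (fun i => lam i ≠ 0) with hSf
  have hSne : Sf.Nonempty := by
    by_contra h
    rw [Finset.not_nonempty_iff_eq_empty, Finset.filter_eq_empty_iff] at h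
    apply hD0
    have hDt0 : Dt = 0 := by
      refine Matrix.ext fun i j => ?_
      have := h (Finset.mem_univ j)
      push_neg at this
      exact hcol i j this
    have hD' : D = V * Dt * star V := by
      rw [hDt]
      simp only [← Matrix.mul_assoc]
      rw [hVV, Matrix.one_mul, Matrix.mul_assoc, hVV, Matrix.mul_one]
    rw [hD', hDt0, Matrix.mul_zero, Matrix.zero_mul]
  set lm := Sf.inf' hSne lam with hlm
  have hlm0 : 0 < lm := by
    rw [hlm, Finset.lt_inf'_iff]
    intro i hi
    exact lt_of_le_of_ne (hlam i) (Ne.symm ((Finset.mem_filter.mp hi).2))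
  refine ⟨lm / (C + 1), div_pos hlm0 (by linarith), ?_⟩
  intro c hc
  have hkey : T + c • D = V * (diagonal (RCLike.ofReal ∘ lam) + c • Dt) * star V := by
    rw [Matrix.mul_add, Matrix.add_mul, ← hspec]
    congr 1
    rw [Matrix.mul_smul, Matrix.smul_mul, hDt]
    congr 1
    simp only [← Matrix.mul_assoc]
    rw [hVV, Matrix.one_mul, Matrix.mul_assoc, hVV, Matrix.mul_one]
  rw [hkey]
  have hinner : (diagonal (RCLike.ofReal ∘ lam) + c • Dt).PosSemidef := by
    refine Matrix.PosSemidef.of_dotProduct_mulVec_nonneg ?_ ?_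
    · refine IsHermitian.add ?_ (aux_herm_smul_real hDtH c)
      refine isHermitian_diagonal_of_self_adjoint _ ?_
      funext i
      simp [RCLike.star_def, Complex.conj_ofReal]
    · intro x
      set W := ∑ i ∈ Sf, Complex.normSq (x i) with hW
      have hW0 : 0 ≤ W := Finset.sum_nonneg fun i _ => Complex.normSq_nonneg _
      have hns_le : ∀ i ∈ Sf, Complex.normSq (x i) ≤ W :=
        fun i hi => Finset.single_le_sum (fun j _ => Complex.normSq_nonneg (x j)) hi
      have habsle : ∀ i ∈ Sf, ‖x i‖ ≤ Real.sqrt W := by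
        intro i hi
        rw [Complex.norm_def]
        exact Real.sqrt_le_sqrt (hns_le i hi)
      -- the Dt quadratic form is real
      have hrreal : star x ⬝ᵥ (Dt *ᵥ x) = (((star x ⬝ᵥ (Dt *ᵥ x)).re : ℝ) : ℂ) := by
        have := aux_herm_dot_real hDtH x
        rw [Complex.star_def] at this
        exact (Complex.conj_eq_iff_re.mp this).symm
      set r := (star x ⬝ᵥ (Dt *ᵥ x)).re with hr
      have habs : |r| ≤ C * W := by
        have hexp : star x ⬝ᵥ (Dt *ᵥ x) = ∑ i, ∑ j, star (x i) * Dt i j * x j := by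
          simp [dotProduct, mulVec, Finset.mul_sum, Finset.sum_mul, mul_assoc, mul_comm, mul_left_comm]
        have h1 : |r| ≤ ‖star x ⬝ᵥ (Dt *ᵥ x)‖ := Complex.abs_re_le_norm _
        have h2 : ‖star x ⬝ᵥ (Dt *ᵥ x)‖ ≤ ∑ i, ∑ j, ‖Dt i j‖ * W := by
          rw [hexp]
          refine le_trans (norm_sum_le _ _) (Finset.sum_le_sum fun i _ => ?_)
          refine le_trans (norm_sum_le _ _) (Finset.sum_le_sum fun j _ => ?_)
          rw [norm_mul, norm_mul]
          by_cases hij : Dt i j = 0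
          · simp [hij]
          · have hiS : i ∈ Sf := by
              rw [hSf, Finset.mem_filter]
              exact ⟨Finset.mem_univ i, fun h0 => hij (hrow i j h0)⟩
            have hjS : j ∈ Sf := by
              rw [hSf, Finset.mem_filter]
              exact ⟨Finset.mem_univ j, fun h0 => hij (hcol i j h0)⟩
            have hxi := habsle i hiS
            have hxj := habsle j hjS
            have hsq : Real.sqrt W * Real.sqrt W = W := Real.mul_self_sqrt hW0
            calc ‖star (x i)‖ * ‖Dt i j‖ * ‖x j‖
                = ‖Dt i j‖ * (‖x i‖ * ‖x j‖) := by
                  rw [Complex.star_def, Complex.norm_conj]; ring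
              _ ≤ ‖Dt i j‖ * (Real.sqrt W * Real.sqrt W) := by
                  refine mul_le_mul_of_nonneg_left ?_ (norm_nonneg _)
                  exact mul_le_mul hxi hxj (norm_nonneg _) (Real.sqrt_nonneg _)
              _ = ‖Dt i j‖ * W := by rw [hsq]
        calc |r| ≤ ∑ i, ∑ j, ‖Dt i j‖ * W := le_trans h1 h2
          _ = C * W := by simp [hC, Finset.sum_mul]
      have hdiag : star x ⬝ᵥ (diagonal (RCLike.ofReal ∘ lam) *ᵥ x)
          = ((∑ i, lam i * Complex.normSq (x i) : ℝ) : ℂ) := by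
        rw [Complex.ofReal_sum, dotProduct]
        refine Finset.sum_congr rfl fun i _ => ?_
        rw [mulVec_diagonal]
        simp only [Pi.star_apply, Complex.star_def, Function.comp_apply, RCLike.ofReal_alg]
        rw [Complex.ofReal_mul, Complex.normSq_eq_conj_mul_self]
        ring_nf
        simp [Complex.real_smul]
        ring
      have htotal : star x ⬝ᵥ ((diagonal (RCLike.ofReal ∘ lam) + c • Dt) *ᵥ x)
          = (((∑ i, lam i * Complex.normSq (x i)) + c * r : ℝ) : ℂ) := by
        rw [add_mulVec, dotProduct_add, hdiag, smul_mulVec, dotProduct_smul, hrreal,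
          Complex.real_smul, ← Complex.ofReal_mul, ← Complex.ofReal_add]
      rw [htotal]
      refine Complex.zero_le_real.mpr ?_
      have h1 : lm * W ≤ ∑ i, lam i * Complex.normSq (x i) := by
        have hA : ∑ i ∈ Sf, lm * Complex.normSq (x i) ≤ ∑ i ∈ Sf, lam i * Complex.normSq (x i) :=
          Finset.sum_le_sum fun i hi =>
            mul_le_mul_of_nonneg_right (Finset.inf'_le _ hi) (Complex.normSq_nonneg _)
        have hB : ∑ i ∈ Sf, lam i * Complex.normSq (x i) ≤ ∑ i, lam i * Complex.normSq (x i) :=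
          Finset.sum_le_sum_of_subset_of_nonneg (Finset.subset_univ _)
            (fun i _ _ => mul_nonneg (hlam i) (Complex.normSq_nonneg _))
        calc lm * W = ∑ i ∈ Sf, lm * Complex.normSq (x i) := by rw [hW, Finset.mul_sum]
          _ ≤ _ := le_trans hA hB
      have h2 : |c * r| ≤ (lm / (C + 1)) * (C * W) := by
        rw [abs_mul]
        exact mul_le_mul hc habs (abs_nonneg _) (le_of_lt (div_pos hlm0 (by linarith)))
      have h3 : (lm / (C + 1)) * (C * W) ≤ lm * W := by
        rw [div_mul_eq_mul_div, div_le_iff₀ (by linarith : (0:ℝ) < C + 1)]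
        nlinarith [mul_nonneg (le_of_lt hlm0) hW0]
      nlinarith [neg_abs_le (c * r), h1, h2, h3]
  have hfin := hinner.mul_mul_conjTranspose_same V
  rw [← star_eq_conjTranspose] at hfin
  exact hfin

end PartE

open Matrix
open scoped ComplexOrder


section PartB
variable {d : ℕ → ℕ} {m : ℕ}

lemma aux_ptrTop_add (A B : CombMat d (m + 1)) : ptrTop (A + B) = ptrTop A + ptrTop B := by
  funext i j
  simp [ptrTop, Finset.sum_add_distrib]

lemma aux_ptrTop_smul (c : ℝ) (A : CombMat d (m + 1)) : ptrTop (c • A) = c • ptrTop A := by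
  funext i j
  simp [ptrTop, Finset.smul_sum]

lemma aux_ptrTop_sub (A B : CombMat d (m + 1)) : ptrTop (A - B) = ptrTop A - ptrTop B := by
  funext i j
  simp [ptrTop, Finset.sum_sub_distrib]

lemma aux_ptrTop_zero : ptrTop (0 : CombMat d (m + 1)) = 0 := by
  funext i j; simp [ptrTop]

lemma aux_tensTop_add (A B : CombMat d m) : tensTop (A + B) = tensTop A + tensTop B := by
  funext i j; simp [tensTop, mul_add]

lemma aux_tensTop_smul (c : ℝ) (A : CombMat d m) : tensTop (c • A) = c • tensTop A := by
  funext i j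
  simp [tensTop, Complex.real_smul]

lemma aux_tensTop_sub (A B : CombMat d m) : tensTop (A - B) = tensTop A - tensTop B := by
  funext i j; simp [tensTop, mul_sub]

lemma aux_tensTop_zero : tensTop (0 : CombMat d m) = 0 := by
  funext i j; simp [tensTop]

lemma aux_ptrTop_tensTop (B : CombMat d m) :
    ptrTop (tensTop B) = ((d m : ℝ) : ℂ) • B := by
  funext i j
  simp [ptrTop, tensTop, Fin.snoc_last, Fin.init_snoc, Finset.sum_const, Finset.card_univ,
    nsmul_eq_mul, Complex.real_smul]

/-- the isometry `ℋ_{m-1}⊗⋯⊗ℋ₀ → ℋ_m⊗⋯⊗ℋ₀`, `v ↦ e_t ⊗ v`. -/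
noncomputable def aux_emb (d : ℕ → ℕ) (m : ℕ) (t : Fin (d m)) :
    Matrix (∀ k : Fin (m + 1), Fin (d k)) (∀ k : Fin m, Fin (d k)) ℂ :=
  fun a i => if a = Fin.snoc i t then 1 else 0

lemma aux_ptrTop_eq_sum_conj (A : CombMat d (m + 1)) :
    ptrTop A = ∑ t : Fin (d m), (aux_emb d m t)ᴴ * A * aux_emb d m t := by
  funext i j
  rw [Matrix.sum_apply]
  refine Finset.sum_congr rfl fun t _ => ?_
  rw [Matrix.mul_apply]
  have h1 : ∀ b, ((aux_emb d m t)ᴴ * A) i b = A (Fin.snoc i t) b := by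
    intro b
    rw [Matrix.mul_apply]
    simp [aux_emb, conjTranspose_apply]
  simp only [h1, aux_emb]
  simp

lemma aux_ptrTop_posSemidef {A : CombMat d (m + 1)} (hA : A.PosSemidef) :
    (ptrTop A).PosSemidef := by
  rw [aux_ptrTop_eq_sum_conj]
  refine Finset.sum_induction _ _ (fun a b ha hb => ha.add hb) Matrix.PosSemidef.zero ?_
  exact fun t _ => hA.conjTranspose_mul_mul_same _

end PartB


/-- A deterministic quantum `N`-comb on `ℋ_{2N-1} ⊗ ⋯ ⊗ ℋ₀`: a positive semidefinite
operator `R = R^(N)` admitting positive semidefinite operators `R^(n)` with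
`Tr_{2n-1}[R^(n)] = I_{2n-2} ⊗ R^(n-1)` and `R^(0) = 1`. -/
def IsDetComb (d : ℕ → ℕ) : (N : ℕ) → CombMat d (2 * N) → Prop
  | 0, R => R = 1
  | (n + 1), R => R.PosSemidef ∧
      ∃ R' : CombMat d (2 * n), IsDetComb d n R' ∧ ptrTop R = tensTop R'



/-- chain conditions without positivity -/
def AffComb (d : ℕ → ℕ) : (n : ℕ) → CombMat d (2 * n) → Prop
  | 0, R => R = 1
  | (n + 1), R => ∃ R' : CombMat d (2 * n), AffComb d n R' ∧ ptrTop R = tensTop R'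

/-- homogeneous (linear) chain conditions -/
def LinComb (d : ℕ → ℕ) : (n : ℕ) → CombMat d (2 * n) → Prop
  | 0, X => X = 0
  | (n + 1), X => ∃ X' : CombMat d (2 * n), LinComb d n X' ∧ ptrTop X = tensTop X'

section PartC
variable {d : ℕ → ℕ}

lemma aux_linComb_zero : ∀ n, LinComb d n (0 : CombMat d (2 * n))
  | 0 => rfl
  | (n + 1) => ⟨0, aux_linComb_zero n, by
      rw [show (0 : CombMat d (2 * (n+1))) = (0 : CombMat d (2*n+1+1)) from rfl]
      rw [aux_ptrTop_zero, aux_tensTop_zero]⟩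

lemma aux_linComb_add : ∀ n (X Y : CombMat d (2 * n)),
    LinComb d n X → LinComb d n Y → LinComb d n (X + Y)
  | 0, X, Y, hX, hY => by
      rw [show LinComb d 0 (X + Y) ↔ X + Y = 0 from Iff.rfl, hX, hY, add_zero]
  | (n + 1), X, Y, ⟨X', hX', hXtr⟩, ⟨Y', hY', hYtr⟩ =>
      ⟨X' + Y', aux_linComb_add n X' Y' hX' hY',
        by rw [aux_ptrTop_add, aux_tensTop_add, hXtr, hYtr]⟩

lemma aux_linComb_smul : ∀ n (c : ℝ) (X : CombMat d (2 * n)),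
    LinComb d n X → LinComb d n (c • X)
  | 0, c, X, hX => by
      rw [show LinComb d 0 (c • X) ↔ c • X = 0 from Iff.rfl, hX, smul_zero]
  | (n + 1), c, X, ⟨X', hX', hXtr⟩ =>
      ⟨c • X', aux_linComb_smul n c X' hX',
        by rw [aux_ptrTop_smul, aux_tensTop_smul, hXtr]⟩

lemma aux_affComb_add_lin : ∀ n (S X : CombMat d (2 * n)),
    AffComb d n S → LinComb d n X → AffComb d n (S + X)
  | 0, S, X, hS, hX => by
      rw [show AffComb d 0 (S + X) ↔ S + X = 1 from Iff.rfl, hS, hX, add_zero]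
  | (n + 1), S, X, ⟨S', hS', hStr⟩, ⟨X', hX', hXtr⟩ =>
      ⟨S' + X', aux_affComb_add_lin n S' X' hS' hX',
        by rw [aux_ptrTop_add, aux_tensTop_add, hStr, hXtr]⟩

lemma aux_affComb_sub : ∀ n (R R' : CombMat d (2 * n)),
    AffComb d n R → AffComb d n R' → LinComb d n (R - R')
  | 0, R, R', hR, hR' => by
      rw [show LinComb d 0 (R - R') ↔ R - R' = 0 from Iff.rfl, hR, hR', sub_self]
  | (n + 1), R, R', ⟨S, hS, hStr⟩, ⟨S', hS', hS'tr⟩ =>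
      ⟨S - S', aux_affComb_sub n S S' hS hS',
        by rw [aux_ptrTop_sub, aux_tensTop_sub, hStr, hS'tr]⟩

lemma aux_detComb_affComb : ∀ n (R : CombMat d (2 * n)), IsDetComb d n R → AffComb d n R
  | 0, R, h => h
  | (n + 1), R, ⟨_, R', hR', htr⟩ => ⟨R', aux_detComb_affComb n R' hR', htr⟩

lemma aux_detComb_posSemidef : ∀ n (R : CombMat d (2 * n)), IsDetComb d n R → R.PosSemidef
  | 0, R, h => by rw [show R = 1 from h]; exact Matrix.PosSemidef.one
  | (n + 1), R, h => h.1

lemma aux_affComb_detComb : ∀ n, (∀ k, k < 2 * n → 0 < d k) →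
    ∀ R : CombMat d (2 * n), R.PosSemidef → AffComb d n R → IsDetComb d n R
  | 0, _, R, _, h => h
  | (n + 1), hd, R, hpsd, ⟨R', hR', htr⟩ => by
      have hdm : 0 < d (2 * n) := hd (2 * n) (by omega)
      have hR'psd : R'.PosSemidef := by
        have h2 : ptrTop (ptrTop R) = ((d (2 * n) : ℝ) : ℂ) • R' := by
          rw [htr, aux_ptrTop_tensTop]; rfl
        have h3 : R' = ((d (2 * n) : ℝ)⁻¹ : ℝ) • (((d (2 * n) : ℝ) : ℂ) • R') := by
          rw [show ((d (2 * n) : ℝ) : ℂ) • R' = ((d (2 * n) : ℝ) : ℝ) • R' from ?_]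
          · rw [smul_smul, inv_mul_cancel₀ (by positivity : (d (2 * n) : ℝ) ≠ 0), one_smul]
          · funext i j
            simp [Complex.real_smul]
        rw [h3, ← h2]
        exact aux_psd_smul_real (aux_ptrTop_posSemidef (aux_ptrTop_posSemidef hpsd))
          (by positivity)
      exact ⟨hpsd, R', aux_affComb_detComb n (fun k hk => hd k (by omega)) R' hR'psd hR', htr⟩

end PartC

/-- A generalized quantum `N`-instrument: a family of positive semidefinite operators
summing to a deterministic quantum `N`-comb. -/
def IsGQI (d : ℕ → ℕ) (N M : ℕ) (T : Fin M → CombMat d (2 * N)) : Prop :=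
  (∀ i, (T i).PosSemidef) ∧ IsDetComb d N (∑ i, T i)


theorem stmt_0 (d : ℕ → ℕ) (N M : ℕ) (T : Fin M → CombMat d (2 * N))
    (hT : IsGQI d N M T) :
    T ∈ {W | IsGQI d N M W}.extremePoints ℝ ↔
      ∀ D : Fin M → CombMat d (2 * N),
        (∀ i, (D i).IsHermitian) →
        (∀ i, LinearMap.range (D i).mulVecLin ≤ LinearMap.range (T i).mulVecLin) →
        (∑ i, D i) ∈ Submodule.span ℝ
          {X : CombMat d (2 * N) | ∃ R R' : CombMat d (2 * N),
            IsDetComb d N R ∧ IsDetComb d N R' ∧ X = R - R'} →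
        ∀ i, D i = 0 := by
  classical
  by_cases hdeg : ∃ k, k < 2 * N ∧ d k = 0
  · -- degenerate case: the whole matrix space is trivial
    obtain ⟨k, hk, h0⟩ := hdeg
    haveI : IsEmpty (∀ j : Fin (2 * N), Fin (d j)) :=
      ⟨fun f => Fin.elim0 (Fin.cast h0 (f ⟨k, hk⟩))⟩
    haveI : Subsingleton (CombMat d (2 * N)) :=
      ⟨fun A B => Matrix.ext fun i _ => isEmptyElim i⟩
    constructor
    · intro _ D _ _ _ i
      exact Subsingleton.elim _ _
    · intro _
      rw [mem_extremePoints]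
      exact ⟨hT, fun y _ z _ _ =>
        ⟨funext fun i => Subsingleton.elim _ _, funext fun i => Subsingleton.elim _ _⟩⟩
  · push_neg at hdeg
    have hd : ∀ k, k < 2 * N → 0 < d k := fun k hk => Nat.pos_of_ne_zero (hdeg k hk)
    constructor
    · -- extreme point → condition
      intro hext D hherm hrange hspan
      rw [mem_extremePoints] at hext
      rcases isEmpty_or_nonempty (Fin M) with hM | hM
      · exact fun i => isEmptyElim i
      have hech : ∀ j : Fin M, ∃ ε : ℝ, 0 < ε ∧ ∀ c : ℝ, |c| ≤ ε →
          ((T j) + c • (D j)).PosSemidef := fun j =>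
        aux_exists_eps (hT.1 j) (hherm j)
          (aux_ker_le_ker (hherm j) (hT.1 j).1 (hrange j))
      choose ε hε0 hεP using hech
      set e : ℝ := Finset.univ.inf' Finset.univ_nonempty ε with he
      have he0 : 0 < e := by
        rw [he, Finset.lt_inf'_iff]; exact fun j _ => hε0 j
      have heP : ∀ (c : ℝ), |c| ≤ e → ∀ j, ((T j) + c • (D j)).PosSemidef :=
        fun c hc j => hεP j c (le_trans hc (Finset.inf'_le _ (Finset.mem_univ j)))
      have hL : LinComb d N (∑ j, D j) := by
        let LC : Submodule ℝ (CombMat d (2 * N)) :=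
          { carrier := {X | LinComb d N X}
            add_mem' := fun ha hb => aux_linComb_add N _ _ ha hb
            zero_mem' := aux_linComb_zero N
            smul_mem' := fun c X hX => aux_linComb_smul N c X hX }
        have hle : Submodule.span ℝ
            {X : CombMat d (2 * N) | ∃ R R' : CombMat d (2 * N),
              IsDetComb d N R ∧ IsDetComb d N R' ∧ X = R - R'} ≤ LC := by
          refine Submodule.span_le.mpr ?_
          rintro X ⟨R, R', hR, hR', rfl⟩
          exact aux_affComb_sub N R R' (aux_detComb_affComb N R hR)
            (aux_detComb_affComb N R' hR')
        exact hle hspan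
      have hGQI : ∀ (c : ℝ), |c| ≤ e → IsGQI d N M (fun j => T j + c • D j) := by
        intro c hc
        refine ⟨heP c hc, ?_⟩
        have hsum : (∑ j, (T j + c • D j)) = (∑ j, T j) + c • (∑ j, D j) := by
          rw [Finset.sum_add_distrib, Finset.smul_sum]
        rw [hsum]
        refine aux_affComb_detComb N hd _ ?_ ?_
        · rw [← hsum]
          exact Finset.sum_induction _ _ (fun a b ha hb => ha.add hb)
            Matrix.PosSemidef.zero (fun j _ => heP c hc j)
        · exact aux_affComb_add_lin N _ _ (aux_detComb_affComb N _ hT.2)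
            (aux_linComb_smul N c _ hL)
      set y := fun j => T j + e • D j with hydef
      set z := fun j => T j + (-e) • D j with hzdef
      have hy : IsGQI d N M y := hGQI e (by rw [abs_of_pos he0])
      have hz : IsGQI d N M z := hGQI (-e) (by rw [abs_neg, abs_of_pos he0])
      have hseg : T ∈ openSegment ℝ y z := by
        refine ⟨1/2, 1/2, by norm_num, by norm_num, by norm_num, ?_⟩
        funext j
        simp only [Pi.add_apply, Pi.smul_apply, hydef, hzdef]
        module
      obtain ⟨hyT, _⟩ := hext.2 y hy z hz hseg
      intro i
      have h1 : T i + e • D i = T i := congrFun hyT i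
      rw [add_eq_left] at h1
      exact (smul_eq_zero.mp h1).resolve_left (ne_of_gt he0)
    · -- condition → extreme point
      intro hcond
      rw [mem_extremePoints]
      refine ⟨hT, ?_⟩
      intro y hy z hz hseg
      obtain ⟨a, b, ha, hb, hab, hsum⟩ := hseg
      have hTi : ∀ i, a • y i + b • z i = T i := fun i => congrFun hsum i
      have hherm : ∀ i, (y i - z i).IsHermitian := fun i =>
        IsHermitian.sub (hy.1 i).1 (hz.1 i).1
      have hrange : ∀ i,
          LinearMap.range (y i - z i).mulVecLin ≤ LinearMap.range (T i).mulVecLin := by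
        intro i
        have hyr : LinearMap.range (y i).mulVecLin ≤ LinearMap.range (T i).mulVecLin := by
          have h := aux_range_le_range_add
            (aux_psd_smul_real (hy.1 i) ha.le) (aux_psd_smul_real (hz.1 i) hb.le)
          rw [aux_range_smul (ne_of_gt ha)] at h
          rw [← hTi i]
          exact h
        have hzr : LinearMap.range (z i).mulVecLin ≤ LinearMap.range (T i).mulVecLin := by
          have h := aux_range_le_range_add
            (aux_psd_smul_real (hz.1 i) hb.le) (aux_psd_smul_real (hy.1 i) ha.le)
          rw [aux_range_smul (ne_of_gt hb)] at h
          rw [← hTi i, add_comm]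
          exact h
        rintro v ⟨u, rfl⟩
        have hsub : (y i - z i).mulVecLin u = (y i).mulVecLin u - (z i).mulVecLin u := by
          simp [Matrix.mulVecLin_apply, sub_mulVec]
        rw [hsub]
        exact Submodule.sub_mem _ (hyr (LinearMap.mem_range_self _ u))
          (hzr (LinearMap.mem_range_self _ u))
      have hspan : (∑ i, (y i - z i)) ∈ Submodule.span ℝ
          {X : CombMat d (2 * N) | ∃ R R' : CombMat d (2 * N),
            IsDetComb d N R ∧ IsDetComb d N R' ∧ X = R - R'} :=
        Submodule.subset_span ⟨∑ i, y i, ∑ i, z i, hy.2, hz.2,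
          Finset.sum_sub_distrib ..⟩
      have hD0 := hcond (fun i => y i - z i) hherm hrange hspan
      have hyz : y = z := funext fun i => sub_eq_zero.mp (hD0 i)
      have hyT : y = T := by
        funext i
        calc y i = (a + b) • y i := by rw [hab, one_smul]
          _ = a • y i + b • y i := add_smul a b (y i)
          _ = a • y i + b • z i := by rw [hyz]
          _ = T i := hTi i
      exact ⟨hyT, hyz ▸ hyT⟩
end

section
/- If {T_i}_{i=1}^M is an extremal quantum 1-tester on ℋ₂⊗ℋ₁ with T_i ≠ 0 for every i, then M ≤ d₁²(d₂² − 1) + 1. -/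
open Matrix Kronecker
open scoped ComplexOrder

/-- A quantum 1-tester with `M` outcomes on `ℋ₂ ⊗ ℋ₁`: a family of positive semidefinite
operators summing to `I₂ ⊗ ρ` for some density operator `ρ` on `ℋ₁`. -/
def IsTester (d₂ d₁ M : ℕ)
    (T : Fin M → Matrix (Fin d₂ × Fin d₁) (Fin d₂ × Fin d₁) ℂ) : Prop :=
  (∀ i, (T i).PosSemidef) ∧
    ∃ ρ : Matrix (Fin d₁) (Fin d₁) ℂ, ρ.PosSemidef ∧ ρ.trace = 1 ∧
      ∑ i, T i = (1 : Matrix (Fin d₂) (Fin d₂) ℂ) ⊗ₖ ρ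

namespace Stmt5Aux

variable {d₁ d₂ M : ℕ}

noncomputable def E (T : Fin M → Matrix (Fin d₂ × Fin d₁) (Fin d₂ × Fin d₁) ℂ)
    (p q : Fin d₂ × Fin d₁) : (Fin M → ℝ) →ₗ[ℝ] ℂ :=
  ∑ i, (LinearMap.proj i).smulRight (T i p q)

lemma E_apply (T : Fin M → Matrix (Fin d₂ × Fin d₁) (Fin d₂ × Fin d₁) ℂ)
    (p q : Fin d₂ × Fin d₁) (c : Fin M → ℝ) :
    E T p q c = (∑ i, c i • T i) p q := by
  simp [E, Matrix.sum_apply]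

lemma psd_real_smul {n : Type*} [Fintype n] {A : Matrix n n ℂ} (hA : A.PosSemidef)
    {r : ℝ} (hr : 0 ≤ r) : (r • A).PosSemidef := by
  constructor
  · rw [Matrix.IsHermitian, Matrix.conjTranspose_smul, star_trivial, hA.1.eq]
  · intro x
    exact (hA.smul hr).2 x

lemma psd_sum {n ι : Type*} [Fintype n] [Fintype ι] (f : ι → Matrix n n ℂ)
    (h : ∀ i, (f i).PosSemidef) : (∑ i, f i).PosSemidef :=
  Finset.sum_induction f _ (fun _ _ ha hb => ha.add hb) Matrix.PosSemidef.zero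
    (fun i _ => h i)

lemma psd_block {d₁ d₂ : ℕ} (hd₂ : 0 < d₂) {B : Matrix (Fin d₁) (Fin d₁) ℂ}
    (h : ((1 : Matrix (Fin d₂) (Fin d₂) ℂ) ⊗ₖ B).PosSemidef) : B.PosSemidef := by
  have h2 := h.submatrix (fun i : Fin d₁ => ((⟨0, hd₂⟩ : Fin d₂), i))
  have : (((1 : Matrix (Fin d₂) (Fin d₂) ℂ) ⊗ₖ B).submatrix
      (fun i : Fin d₁ => ((⟨0, hd₂⟩ : Fin d₂), i))
      (fun i : Fin d₁ => ((⟨0, hd₂⟩ : Fin d₂), i))) = B := by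
    ext i j
    simp [Matrix.submatrix_apply, Matrix.one_apply]
  rwa [this] at h2

lemma tester_kernel (hd₂ : 0 < d₂)
    (T : Fin M → Matrix (Fin d₂ × Fin d₁) (Fin d₂ × Fin d₁) ℂ)
    (hherm : ∀ i, (T i).IsHermitian)
    (hM : d₁ ^ 2 * (d₂ ^ 2 - 1) + 1 < M) :
    ∃ c : Fin M → ℝ, c ≠ 0 ∧ (∀ i, |c i| ≤ 1) ∧
      ∃ σ : Matrix (Fin d₁) (Fin d₁) ℂ, σ.trace = 0 ∧
        ∑ i, c i • T i = (1 : Matrix (Fin d₂) (Fin d₂) ℂ) ⊗ₖ σ := by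
  classical
  set z : Fin d₂ := ⟨0, hd₂⟩ with hz
  set ι := {pq : (Fin d₂ × Fin d₁) × (Fin d₂ × Fin d₁) // ¬(pq.1.1 = z ∧ pq.2.1 = z)}
    with hι
  set L : (Fin M → ℝ) →ₗ[ℝ] (ι → ℝ) × ℝ :=
    LinearMap.prod
      (LinearMap.pi fun pq : ι =>
        (Complex.reLm + Complex.imLm) ∘ₗ
          (E T pq.1.1 pq.1.2 -
            if pq.1.1.1 = pq.1.2.1 then E T (z, pq.1.1.2) (z, pq.1.2.2) else 0))
      (Complex.reLm ∘ₗ ∑ j, E T (z, j) (z, j)) with hL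
  -- dimension count
  have hcard0 : Fintype.card {pq : (Fin d₂ × Fin d₁) × (Fin d₂ × Fin d₁) //
      pq.1.1 = z ∧ pq.2.1 = z} = d₁ * d₁ := by
    have e : {pq : (Fin d₂ × Fin d₁) × (Fin d₂ × Fin d₁) //
        pq.1.1 = z ∧ pq.2.1 = z} ≃ Fin d₁ × Fin d₁ :=
      { toFun := fun x => (x.1.1.2, x.1.2.2)
        invFun := fun ij => ⟨((z, ij.1), (z, ij.2)), rfl, rfl⟩
        left_inv := by
          rintro ⟨⟨⟨a, i⟩, ⟨b, j⟩⟩, h1, h2⟩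
          simp only at h1 h2
          subst h1; subst h2; rfl
        right_inv := fun ij => rfl }
    rw [Fintype.card_congr e, Fintype.card_prod, Fintype.card_fin]
  have hcardι : Fintype.card ι = d₂ ^ 2 * d₁ ^ 2 - d₁ ^ 2 := by
    have h := Fintype.card_subtype_compl
      (fun pq : (Fin d₂ × Fin d₁) × (Fin d₂ × Fin d₁) => pq.1.1 = z ∧ pq.2.1 = z)
    rw [hcard0] at h
    have h2 : Fintype.card ((Fin d₂ × Fin d₁) × (Fin d₂ × Fin d₁)) = d₂ ^ 2 * d₁ ^ 2 := by
      simp [Fintype.card_prod]; ring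
    rw [h2] at h
    rw [h]
    congr 1
    ring
  have harith : d₂ ^ 2 * d₁ ^ 2 - d₁ ^ 2 + 1 = d₁ ^ 2 * (d₂ ^ 2 - 1) + 1 := by
    obtain ⟨k, hk⟩ : ∃ k, d₂ ^ 2 = k + 1 :=
      ⟨d₂ ^ 2 - 1, by have := Nat.one_le_pow 2 d₂ hd₂; omega⟩
    rw [hk, Nat.add_sub_cancel, add_mul, one_mul, Nat.add_sub_cancel, mul_comm]
  have hlt : Module.finrank ℝ ((ι → ℝ) × ℝ) < Module.finrank ℝ (Fin M → ℝ) := by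
    rw [Module.finrank_prod, Module.finrank_pi, Module.finrank_pi, Module.finrank_self,
      Fintype.card_fin, hcardι]
    omega
  have hninj : ¬ Function.Injective L := fun hinj =>
    absurd (LinearMap.finrank_le_finrank_of_injective hinj) (by omega)
  have hker : LinearMap.ker L ≠ ⊥ := by
    rwa [Ne, LinearMap.ker_eq_bot]
  obtain ⟨c0, hc0mem, hc00⟩ := Submodule.exists_mem_ne_zero_of_ne_bot hker
  -- normalize
  set s : ℝ := ∑ i, |c0 i| with hs
  have hs0 : 0 ≤ s := Finset.sum_nonneg fun i _ => abs_nonneg _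
  have hs1 : (0 : ℝ) < 1 + s := by linarith
  set c : Fin M → ℝ := (1 + s)⁻¹ • c0 with hcdef
  have hc0 : c ≠ 0 := smul_ne_zero (inv_ne_zero hs1.ne') hc00
  have hc1 : ∀ i, |c i| ≤ 1 := by
    intro i
    have hle : |c0 i| ≤ s := Finset.single_le_sum (fun j _ => abs_nonneg (c0 j))
      (Finset.mem_univ i)
    have : |c i| = (1 + s)⁻¹ * |c0 i| := by
      rw [hcdef, Pi.smul_apply, smul_eq_mul, abs_mul, abs_of_pos (inv_pos.mpr hs1)]
    rw [this]
    calc (1 + s)⁻¹ * |c0 i| ≤ (1 + s)⁻¹ * (1 + s) :=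
          mul_le_mul_of_nonneg_left (by linarith) (inv_pos.mpr hs1).le
      _ = 1 := inv_mul_cancel₀ hs1.ne'
  have hLc : L c = 0 := by
    have h0 : L c0 = 0 := hc0mem
    rw [hcdef, LinearMap.map_smul, h0, smul_zero]
  refine ⟨c, hc0, hc1, ?_⟩
  -- extract σ
  set X : Matrix (Fin d₂ × Fin d₁) (Fin d₂ × Fin d₁) ℂ := ∑ i, c i • T i with hX
  have hXherm : X.IsHermitian := by
    rw [Matrix.IsHermitian, hX, Matrix.conjTranspose_sum]
    refine Finset.sum_congr rfl fun i _ => ?_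
    rw [Matrix.conjTranspose_smul, star_trivial, (hherm i).eq]
  have hfst : ∀ pq : ι,
      (X pq.1.1 pq.1.2 -
        (if pq.1.1.1 = pq.1.2.1 then X (z, pq.1.1.2) (z, pq.1.2.2) else 0)).re +
      (X pq.1.1 pq.1.2 -
        (if pq.1.1.1 = pq.1.2.1 then X (z, pq.1.1.2) (z, pq.1.2.2) else 0)).im = 0 := by
    intro pq
    have h := congrFun (congrArg Prod.fst hLc) pq
    simp only [hL, LinearMap.prod_apply, Function.prod, LinearMap.pi_apply, LinearMap.comp_apply,
      LinearMap.sub_apply, LinearMap.add_apply, Complex.reLm_coe, Complex.imLm_coe,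
      apply_ite (fun f : (Fin M → ℝ) →ₗ[ℝ] ℂ => f c), LinearMap.zero_apply, E_apply,
      Pi.zero_apply, Prod.fst] at h
    rw [← hX] at h
    simpa [Complex.sub_re, Complex.sub_im] using h
  have hsnd : (∑ j, X (z, j) (z, j)).re = 0 := by
    have h := congrArg Prod.snd hLc
    simp only [hL, LinearMap.prod_apply, Function.prod, LinearMap.comp_apply, LinearMap.sum_apply,
      Complex.reLm_coe, E_apply, Prod.snd] at h
    rw [← hX] at h
    simpa [Complex.re_sum] using h
  set σ : Matrix (Fin d₁) (Fin d₁) ℂ := Matrix.of fun i j => X (z, i) (z, j) with hσ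
  have hmain : ∀ p q : Fin d₂ × Fin d₁,
      X p q = if p.1 = q.1 then σ p.2 q.2 else 0 := by
    intro p q
    by_cases hP : p.1 = z ∧ q.1 = z
    · obtain ⟨h1, h2⟩ := hP
      have hp : p = (z, p.2) := Prod.ext h1 rfl
      have hq : q = (z, q.2) := Prod.ext h2 rfl
      rw [if_pos (h1.trans h2.symm)]
      conv_lhs => rw [hp, hq]
      rfl
    · have key1 := hfst ⟨(p, q), hP⟩
      have key2 := hfst ⟨(q, p), by tauto⟩
      simp only at key1 key2
      set w : ℂ := X p q - (if p.1 = q.1 then X (z, p.2) (z, q.2) else 0) with hw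
      have hwstar : X q p - (if q.1 = p.1 then X (z, q.2) (z, p.2) else 0) = star w := by
        rw [hw, star_sub]
        congr 1
        · exact (hXherm.apply q p).symm
        · rw [apply_ite (star : ℂ → ℂ), star_zero]
          congr 1
          · simp [eq_comm]
          · exact (hXherm.apply (z, q.2) (z, p.2)).symm
      rw [hwstar] at key2
      have hre : w.re = 0 := by
        have := key2
        simp only [Complex.star_def, Complex.conj_re, Complex.conj_im] at this
        linarith [key1]
      have him : w.im = 0 := by
        have := key2
        simp only [Complex.star_def, Complex.conj_re, Complex.conj_im] at this
        linarith [key1]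
      have hw0 : w = 0 := Complex.ext hre him
      have : X p q = if p.1 = q.1 then X (z, p.2) (z, q.2) else 0 := by
        have := sub_eq_zero.mp (hw ▸ hw0 : X p q - _ = 0)
        exact this
      rw [this]
      rfl
  refine ⟨σ, ?_, ?_⟩
  · have himdiag : ∀ j, (X (z, j) (z, j)).im = 0 := by
      intro j
      have := hXherm.apply (z, j) (z, j)
      have h2 := congrArg Complex.im this
      simp only [Complex.star_def, Complex.conj_im] at h2
      linarith
    rw [Matrix.trace]
    apply Complex.ext
    · simpa [Matrix.diag, hσ, Complex.re_sum] using hsnd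
    · simp [Matrix.diag, hσ, Complex.im_sum, himdiag]
  · ext p q
    rw [hmain (p.1, p.2) (q.1, q.2)]
    simp only [Matrix.kroneckerMap_apply, Matrix.one_apply, ite_mul, one_mul, zero_mul]

end Stmt5Aux

theorem stmt_5 {d₁ d₂ M : ℕ} (T : Fin M → Matrix (Fin d₂ × Fin d₁) (Fin d₂ × Fin d₁) ℂ)
    (hT : IsTester d₂ d₁ M T)
    (hext : T ∈ {W | IsTester d₂ d₁ M W}.extremePoints ℝ)
    (hne : ∀ i, T i ≠ 0) :
    M ≤ d₁ ^ 2 * (d₂ ^ 2 - 1) + 1 := by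
  by_contra hcon
  push_neg at hcon
  obtain ⟨hpsd, ρ, hρ, hρtr, hsum⟩ := hT
  have hM0 : 0 < M := by omega
  have hd₂ : 0 < d₂ := by
    rcases Nat.eq_zero_or_pos d₂ with h0 | h
    · subst h0
      exact absurd (by ext p q; exact p.1.elim0) (hne ⟨0, hM0⟩)
    · exact h
  obtain ⟨c, hc0, hc1, σ, hσtr, hXσ⟩ :=
    Stmt5Aux.tester_kernel hd₂ T (fun i => (hpsd i).1) hcon
  have hmem : ∀ s : ℝ, |s| = 1 → IsTester d₂ d₁ M (fun i => (1 + s * c i) • T i) := by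
    intro s hs
    have habs : ∀ i, |s * c i| ≤ 1 := fun i => by
      rw [abs_mul, hs, one_mul]; exact hc1 i
    have hnn : ∀ i, (0 : ℝ) ≤ 1 + s * c i := fun i => by
      have := (abs_le.mp (habs i)).1; linarith
    have hsum2 : ∑ i, (1 + s * c i) • T i
        = (1 : Matrix (Fin d₂) (Fin d₂) ℂ) ⊗ₖ (ρ + s • σ) := by
      calc ∑ i, (1 + s * c i) • T i = ∑ i, (T i + s • (c i • T i)) :=
            Finset.sum_congr rfl fun i _ => by rw [add_smul, one_smul, smul_smul]
        _ = ∑ i, T i + s • ∑ i, c i • T i := by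
            rw [Finset.sum_add_distrib, Finset.smul_sum]
        _ = (1 : Matrix (Fin d₂) (Fin d₂) ℂ) ⊗ₖ ρ + s • ((1 : Matrix (Fin d₂) (Fin d₂) ℂ) ⊗ₖ σ) := by
            rw [hsum, hXσ]
        _ = (1 : Matrix (Fin d₂) (Fin d₂) ℂ) ⊗ₖ (ρ + s • σ) := by
            rw [Matrix.kronecker_add, Matrix.kronecker_smul]
    refine ⟨fun i => Stmt5Aux.psd_real_smul (hpsd i) (hnn i), ρ + s • σ, ?_, ?_, hsum2⟩
    · apply Stmt5Aux.psd_block hd₂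
      rw [← hsum2]
      exact Stmt5Aux.psd_sum _ (fun i => Stmt5Aux.psd_real_smul (hpsd i) (hnn i))
    · rw [Matrix.trace_add, Matrix.trace_smul, hρtr, hσtr, smul_zero, add_zero]
  obtain ⟨hTmem, hextr⟩ := hext
  have h1 : (fun i => (1 + 1 * c i) • T i) ∈ {W | IsTester d₂ d₁ M W} :=
    hmem 1 (by norm_num)
  have h2 : (fun i => (1 + (-1) * c i) • T i) ∈ {W | IsTester d₂ d₁ M W} :=
    hmem (-1) (by norm_num)
  have hseg : T ∈ openSegment ℝ (fun i => (1 + 1 * c i) • T i)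
      (fun i => (1 + (-1) * c i) • T i) := by
    refine ⟨1/2, 1/2, by norm_num, by norm_num, by norm_num, ?_⟩
    funext i
    simp only [Pi.add_apply, Pi.smul_apply]
    rw [smul_smul, smul_smul, ← add_smul]
    have : (1/2 : ℝ) * (1 + 1 * c i) + (1/2) * (1 + (-1) * c i) = 1 := by ring
    rw [this, one_smul]
  have heq := hextr h1 h2 hseg
  obtain ⟨i₀, hi₀⟩ := Function.ne_iff.mp hc0
  have hTi : c i₀ • T i₀ = 0 := by
    have h := congrFun heq i₀
    simp only [one_mul] at h
    rw [add_smul, one_smul] at h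
    exact add_eq_left.mp h
  apply hne i₀
  ext p q
  have hpq := congrFun (congrFun hTi p) q
  simp only [Matrix.smul_apply, Matrix.zero_apply] at hpq ⊢
  rcases smul_eq_zero.mp hpq with h | h
  · exact absurd h hi₀
  · exact h
end

section
/- Let ρ be a full-rank density operator on ℋ₁, let U be a unitary on ℋ₁, and let {T_i}_{i=1}^M be a quantum 1-tester on ℋ₂⊗ℋ₁ with normalization ∑_{i=1}^M T_i = (1/d₁) I₂⊗I₁. Define T′_i = d₁ (I₂⊗√ρ U) T_i (I₂⊗U†√ρ). Then {T′_i}_{i=1}^M is a quantum 1-tester with normalization ∑_{i=1}^M T′_i = I₂⊗ρ, and {T′_i}_{i=1}^M is extremal if and only if {T_i}_{i=1}^M is extremal. -/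
open Matrix Kronecker
open scoped ComplexOrder

/-- The positive semidefinite square root, as `Matrix.PosSemidef.sqrt` was defined in older Mathlib. -/
noncomputable def Matrix.PosSemidef.sqrt {n 𝕜 : Type*} [Fintype n] [DecidableEq n] [RCLike 𝕜]
    {A : Matrix n n 𝕜} (hA : A.PosSemidef) : Matrix n n 𝕜 :=
  hA.1.eigenvectorUnitary.1 * diagonal ((↑) ∘ (√·) ∘ hA.1.eigenvalues) *
  (star hA.1.eigenvectorUnitary : Matrix n n 𝕜)

private lemma sqrt_herm' {n : Type*} [Fintype n] [DecidableEq n] {A : Matrix n n ℂ}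
    (hA : A.PosSemidef) : hA.sqrtᴴ = hA.sqrt := by
  unfold Matrix.PosSemidef.sqrt
  rw [conjTranspose_mul, conjTranspose_mul, diagonal_conjTranspose]
  simp only [Unitary.coe_star, conjTranspose_conjTranspose, Matrix.mul_assoc]
  have hst : star (RCLike.ofReal ∘ (fun x => √x) ∘ hA.1.eigenvalues : n → ℂ)
      = RCLike.ofReal ∘ (fun x => √x) ∘ hA.1.eigenvalues := by
    ext i; simp
  rw [hst]
  simp only [← Matrix.star_eq_conjTranspose, star_star]

private lemma sqrt_mul_self' {n : Type*} [Fintype n] [DecidableEq n] {A : Matrix n n ℂ}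
    (hA : A.PosSemidef) : hA.sqrt * hA.sqrt = A := by
  unfold Matrix.PosSemidef.sqrt
  conv_rhs => rw [hA.1.spectral_theorem, Unitary.conjStarAlgAut_apply]
  have hV : (star hA.1.eigenvectorUnitary : Matrix n n ℂ) * hA.1.eigenvectorUnitary.1 = 1 :=
    Unitary.coe_star_mul_self _
  have hD : diagonal (RCLike.ofReal ∘ (√·) ∘ hA.1.eigenvalues : n → ℂ) *
      diagonal (RCLike.ofReal ∘ (√·) ∘ hA.1.eigenvalues : n → ℂ)
      = diagonal (RCLike.ofReal ∘ hA.1.eigenvalues : n → ℂ) := by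
    rw [diagonal_mul_diagonal]
    congr 1
    ext i
    simp only [Function.comp]
    rw [← RCLike.ofReal_mul, Real.mul_self_sqrt (hA.eigenvalues_nonneg i)]
  calc _ = hA.1.eigenvectorUnitary.1 * diagonal (RCLike.ofReal ∘ (√·) ∘ hA.1.eigenvalues : n → ℂ) *
        ((star hA.1.eigenvectorUnitary : Matrix n n ℂ) * hA.1.eigenvectorUnitary.1) *
        diagonal (RCLike.ofReal ∘ (√·) ∘ hA.1.eigenvalues : n → ℂ) *
        (star hA.1.eigenvectorUnitary : Matrix n n ℂ) := by
        simp only [Matrix.mul_assoc]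
    _ = _ := by
        rw [hV, Matrix.mul_one, Matrix.mul_assoc _ (diagonal _) (diagonal _), hD]

attribute [local irreducible] Matrix.PosSemidef.sqrt

private lemma kron_conjT {m n : Type*} (A : Matrix m m ℂ) (B : Matrix n n ℂ) :
    (A ⊗ₖ B)ᴴ = Aᴴ ⊗ₖ Bᴴ := by
  ext ⟨i, j⟩ ⟨k, l⟩
  simp [conjTranspose_apply, kroneckerMap_apply, mul_comm]

private lemma psd_smul {n : Type*} [Fintype n] {A : Matrix n n ℂ}
    (hA : A.PosSemidef) {z : ℂ} (hz : 0 ≤ z) : (z • A).PosSemidef := by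
  exact hA.smul hz

private lemma psd_trace_nonneg {n : Type*} [Fintype n] [DecidableEq n] {A : Matrix n n ℂ}
    (hA : A.PosSemidef) : 0 ≤ A.trace := by
  rw [Matrix.trace]
  refine Finset.sum_nonneg fun i _ => ?_
  exact hA.diag_nonneg

private lemma psd_trace_zero {n : Type*} [Fintype n] [DecidableEq n] {A : Matrix n n ℂ}
    (hA : A.PosSemidef) (h : A.trace = 0) : A = 0 := by
  obtain ⟨B, rfl⟩ : ∃ B : Matrix n n ℂ, A = Bᴴ * B :=
    ⟨hA.sqrt, by rw [sqrt_herm', sqrt_mul_self']⟩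
  suffices hB : B = 0 by rw [hB]; simp
  have key : (Bᴴ * B).trace = ((∑ j, ∑ k, Complex.normSq (B k j) : ℝ) : ℂ) := by
    push_cast
    rw [Matrix.trace]
    refine Finset.sum_congr rfl fun j _ => ?_
    rw [Matrix.diag_apply, Matrix.mul_apply]
    refine Finset.sum_congr rfl fun k _ => ?_
    rw [Matrix.conjTranspose_apply, Complex.star_def, Complex.normSq_eq_conj_mul_self]
  rw [key] at h
  have h2 : ∑ j, ∑ k, Complex.normSq (B k j) = 0 := by exact_mod_cast h
  ext k j
  have h3 := (Finset.sum_eq_zero_iff_of_nonneg (fun j _ => Finset.sum_nonneg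
    (fun k _ => Complex.normSq_nonneg _))).mp h2 j (Finset.mem_univ j)
  have h4 := (Finset.sum_eq_zero_iff_of_nonneg (fun k _ => Complex.normSq_nonneg _)).mp h3 k
    (Finset.mem_univ k)
  simpa using Complex.normSq_eq_zero.mp h4

private lemma kron_one_mul {d₂ d₁ : ℕ} (A B : Matrix (Fin d₁) (Fin d₁) ℂ) :
    ((1 : Matrix (Fin d₂) (Fin d₂) ℂ) ⊗ₖ A) * ((1 : Matrix (Fin d₂) (Fin d₂) ℂ) ⊗ₖ B)
      = (1 : Matrix (Fin d₂) (Fin d₂) ℂ) ⊗ₖ (A * B) := by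
  rw [← Matrix.mul_kronecker_mul, one_mul]

private lemma sum_PWQ {n : Type*} [Fintype n] {M : ℕ} (P Q : Matrix n n ℂ)
    (W : Fin M → Matrix n n ℂ) :
    ∑ i, P * W i * Q = P * (∑ i, W i) * Q := by
  rw [Finset.mul_sum, Finset.sum_mul]

private lemma cancel_conj {d₂ d₁ : ℕ} {B Bi : Matrix (Fin d₁) (Fin d₁) ℂ}
    (hBiB : Bi * B = 1) (hBBi : B * Bi = 1) {z : ℂ} (hz : z ≠ 0)
    (X : Matrix (Fin d₂ × Fin d₁) (Fin d₂ × Fin d₁) ℂ) :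
    z⁻¹ • (((1 : Matrix (Fin d₂) (Fin d₂) ℂ) ⊗ₖ Bi) *
        (z • (((1 : Matrix (Fin d₂) (Fin d₂) ℂ) ⊗ₖ B) * X *
          ((1 : Matrix (Fin d₂) (Fin d₂) ℂ) ⊗ₖ Bᴴ))) *
        ((1 : Matrix (Fin d₂) (Fin d₂) ℂ) ⊗ₖ Biᴴ)) = X := by
  have h1 : ((1 : Matrix (Fin d₂) (Fin d₂) ℂ) ⊗ₖ Bi) * ((1 : Matrix (Fin d₂) (Fin d₂) ℂ) ⊗ₖ B)
      = 1 := by rw [kron_one_mul, hBiB, one_kronecker_one]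
  have h2 : ((1 : Matrix (Fin d₂) (Fin d₂) ℂ) ⊗ₖ Bᴴ) * ((1 : Matrix (Fin d₂) (Fin d₂) ℂ) ⊗ₖ Biᴴ)
      = 1 := by rw [kron_one_mul, ← conjTranspose_mul, hBiB, conjTranspose_one,
        one_kronecker_one]
  rw [Matrix.mul_smul, Matrix.smul_mul, smul_smul, inv_mul_cancel₀ hz, one_smul]
  calc ((1 : Matrix (Fin d₂) (Fin d₂) ℂ) ⊗ₖ Bi) *
        (((1 : Matrix (Fin d₂) (Fin d₂) ℂ) ⊗ₖ B) * X * ((1 : Matrix (Fin d₂) (Fin d₂) ℂ) ⊗ₖ Bᴴ)) *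
        ((1 : Matrix (Fin d₂) (Fin d₂) ℂ) ⊗ₖ Biᴴ)
      = (((1 : Matrix (Fin d₂) (Fin d₂) ℂ) ⊗ₖ Bi) * ((1 : Matrix (Fin d₂) (Fin d₂) ℂ) ⊗ₖ B)) * X *
        ((((1 : Matrix (Fin d₂) (Fin d₂) ℂ) ⊗ₖ Bᴴ)) * ((1 : Matrix (Fin d₂) (Fin d₂) ℂ) ⊗ₖ Biᴴ)) := by
        simp only [Matrix.mul_assoc]
    _ = X := by rw [h1, h2, one_mul, mul_one]

private lemma key_dir {d₁ d₂ M : ℕ} (hd₂ : 0 < d₂)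
    {c : ℝ} (hc : 0 < c) {B Bi : Matrix (Fin d₁) (Fin d₁) ℂ}
    (hBBi : B * Bi = 1) (hBiB : Bi * B = 1)
    {T T' : Fin M → Matrix (Fin d₂ × Fin d₁) (Fin d₂ × Fin d₁) ℂ}
    (hrel : ∀ i, T' i = (c : ℂ) • (((1 : Matrix (Fin d₂) (Fin d₂) ℂ) ⊗ₖ B) * T i *
      ((1 : Matrix (Fin d₂) (Fin d₂) ℂ) ⊗ₖ Bᴴ)))
    (hT' : IsTester d₂ d₁ M T')
    (hex : T ∈ {W | IsTester d₂ d₁ M W}.extremePoints ℝ) :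
    T' ∈ {W | IsTester d₂ d₁ M W}.extremePoints ℝ := by
  classical
  obtain ⟨hTmem, hTex⟩ := mem_extremePoints.mp hex
  have hc0 : (c : ℂ) ≠ 0 := by exact_mod_cast hc.ne'
  have hd₂0 : (d₂ : ℂ) ≠ 0 := by exact_mod_cast hd₂.ne'
  have hQP : ((1 : Matrix (Fin d₂) (Fin d₂) ℂ) ⊗ₖ Biᴴ)
      = (((1 : Matrix (Fin d₂) (Fin d₂) ℂ) ⊗ₖ Bi))ᴴ := by
    rw [kron_conjT, conjTranspose_one]
  -- Step: conjugating a tester by `c⁻¹ • (1⊗Bi) ⬝ (1⊗Biᴴ)` yields a positive multiple of a tester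
  have step : ∀ W : Fin M → Matrix (Fin d₂ × Fin d₁) (Fin d₂ × Fin d₁) ℂ,
      IsTester d₂ d₁ M W → ∃ t : ℝ, 0 < t ∧ ∃ X, IsTester d₂ d₁ M X ∧
        ∀ i, (c : ℂ)⁻¹ • (((1 : Matrix (Fin d₂) (Fin d₂) ℂ) ⊗ₖ Bi) * W i *
          ((1 : Matrix (Fin d₂) (Fin d₂) ℂ) ⊗ₖ Biᴴ)) = (t : ℂ) • X i := by
    intro W hW
    obtain ⟨hWpsd, σ, hσpsd, hσtr, hσsum⟩ := hW
    set μ : Matrix (Fin d₁) (Fin d₁) ℂ := (c : ℂ)⁻¹ • (Bi * σ * Biᴴ) with hμ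
    have hcinv : (0 : ℂ) ≤ (c : ℂ)⁻¹ := by
      rw [← Complex.ofReal_inv]
      exact Complex.zero_le_real.mpr (inv_nonneg.mpr hc.le)
    have hμpsd : μ.PosSemidef := psd_smul (hσpsd.mul_mul_conjTranspose_same Bi) hcinv
    have hμne : μ ≠ 0 := by
      intro h0
      have h1 : Bi * σ * Biᴴ = 0 := by
        have h2 := congrArg (fun m => (c : ℂ) • m) h0
        simpa [hμ, smul_smul, mul_inv_cancel₀ hc0] using h2
      have hσ0 : σ = 0 := by
        have h3 : σ = B * (Bi * σ * Biᴴ) * Bᴴ := by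
          calc σ = (B * Bi) * σ * (B * Bi)ᴴ := by rw [hBBi]; simp
            _ = B * (Bi * σ * Biᴴ) * Bᴴ := by
                rw [conjTranspose_mul]; simp only [Matrix.mul_assoc]
        rw [h3, h1]; simp
      rw [hσ0] at hσtr; simp at hσtr
    have htr0 : μ.trace ≠ 0 := fun h => hμne (psd_trace_zero hμpsd h)
    have htrn : 0 ≤ μ.trace := psd_trace_nonneg hμpsd
    set t : ℝ := μ.trace.re with ht
    have htrace : μ.trace = (t : ℂ) := by
      rw [Complex.le_def] at htrn
      exact Complex.ext rfl (by simpa using htrn.2.symm)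
    have ht0 : t ≠ 0 := by
      intro h
      exact htr0 (by rw [htrace, h]; simp)
    have htpos : 0 < t := by
      rcases Complex.le_def.mp htrn with ⟨h1, _⟩
      exact lt_of_le_of_ne (by simpa using h1) (Ne.symm ht0)
    have htc0 : (t : ℂ) ≠ 0 := by exact_mod_cast ht0
    refine ⟨t, htpos, fun i => (t : ℂ)⁻¹ • ((c : ℂ)⁻¹ •
      (((1 : Matrix (Fin d₂) (Fin d₂) ℂ) ⊗ₖ Bi) * W i *
        ((1 : Matrix (Fin d₂) (Fin d₂) ℂ) ⊗ₖ Biᴴ))), ⟨?_, ?_⟩, ?_⟩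
    · intro i
      have hpsd0 : (((1 : Matrix (Fin d₂) (Fin d₂) ℂ) ⊗ₖ Bi) * W i *
          ((1 : Matrix (Fin d₂) (Fin d₂) ℂ) ⊗ₖ Biᴴ)).PosSemidef := by
        rw [hQP]; exact (hWpsd i).mul_mul_conjTranspose_same _
      have htinv : (0 : ℂ) ≤ (t : ℂ)⁻¹ := by
        rw [← Complex.ofReal_inv]
        exact Complex.zero_le_real.mpr (inv_nonneg.mpr htpos.le)
      exact psd_smul (psd_smul hpsd0 hcinv) htinv
    · refine ⟨(t : ℂ)⁻¹ • μ, ?_, ?_, ?_⟩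
      · refine psd_smul hμpsd ?_
        rw [← Complex.ofReal_inv]
        exact Complex.zero_le_real.mpr (inv_nonneg.mpr htpos.le)
      · rw [Matrix.trace_smul, htrace, smul_eq_mul, inv_mul_cancel₀ htc0]
      · rw [← Finset.smul_sum, ← Finset.smul_sum, sum_PWQ, hσsum, kron_one_mul, kron_one_mul,
          hμ, Matrix.kronecker_smul, Matrix.kronecker_smul]
    · intro i
      rw [smul_smul, mul_inv_cancel₀ htc0, one_smul]
  -- now the main argument
  refine mem_extremePoints.mpr ⟨hT', fun W₁ hW₁ W₂ hW₂ hseg => ?_⟩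
  obtain ⟨a, b, ha, hb, hab, hsum⟩ := hseg
  obtain ⟨t₁, ht₁, X₁, hX₁, hrel₁⟩ := step W₁ hW₁
  obtain ⟨t₂, ht₂, X₂, hX₂, hrel₂⟩ := step W₂ hW₂
  have hT'W : ∀ i, T' i = a • W₁ i + b • W₂ i := by
    intro i
    have := congrFun hsum i
    simpa using this.symm
  -- express T as a combination of X₁, X₂
  have hTeq : ∀ i, T i = ((a * t₁ : ℝ) : ℂ) • X₁ i + ((b * t₂ : ℝ) : ℂ) • X₂ i := by
    intro i
    have h1 : T i = (c : ℂ)⁻¹ • (((1 : Matrix (Fin d₂) (Fin d₂) ℂ) ⊗ₖ Bi) * T' i *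
        ((1 : Matrix (Fin d₂) (Fin d₂) ℂ) ⊗ₖ Biᴴ)) := by
      conv_lhs => rw [← cancel_conj hBiB hBBi hc0 (T i)]
      rw [← hrel i]
    rw [h1, hT'W i]
    have hra : (a • W₁ i : Matrix _ _ ℂ) = ((a : ℝ) : ℂ) • W₁ i := by
      ext x y; simp [Matrix.smul_apply, Complex.real_smul]
    have hrb : (b • W₂ i : Matrix _ _ ℂ) = ((b : ℝ) : ℂ) • W₂ i := by
      ext x y; simp [Matrix.smul_apply, Complex.real_smul]
    rw [hra, hrb, Matrix.mul_add, Matrix.add_mul, smul_add, Matrix.mul_smul, Matrix.mul_smul,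
      Matrix.smul_mul, Matrix.smul_mul, smul_comm ((c : ℂ)⁻¹), smul_comm ((c : ℂ)⁻¹),
      hrel₁ i, hrel₂ i, smul_smul, smul_smul]
    push_cast
    ring_nf
  -- weights sum to one
  obtain ⟨hTpsd, ρT, hρTpsd, hρTtr, hρTsum⟩ := hTmem
  obtain ⟨hX₁psd, σ₁, hσ₁psd, hσ₁tr, hσ₁sum⟩ := hX₁
  obtain ⟨hX₂psd, σ₂, hσ₂psd, hσ₂tr, hσ₂sum⟩ := hX₂
  have e1 : (∑ i, T i).trace = (d₂ : ℂ) := by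
    rw [hρTsum, trace_kronecker, trace_one, hρTtr, mul_one]
    simp
  have e2 : (∑ i, T i).trace = ((a * t₁ : ℝ) : ℂ) * (d₂ : ℂ) + ((b * t₂ : ℝ) : ℂ) * (d₂ : ℂ) := by
    have hs : ∑ i, T i = ((a * t₁ : ℝ) : ℂ) • ((1 : Matrix (Fin d₂) (Fin d₂) ℂ) ⊗ₖ σ₁)
        + ((b * t₂ : ℝ) : ℂ) • ((1 : Matrix (Fin d₂) (Fin d₂) ℂ) ⊗ₖ σ₂) := by
      rw [← hσ₁sum, ← hσ₂sum, Finset.smul_sum, Finset.smul_sum, ← Finset.sum_add_distrib]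
      exact Finset.sum_congr rfl fun i _ => hTeq i
    rw [hs, Matrix.trace_add, Matrix.trace_smul, Matrix.trace_smul, trace_kronecker,
      trace_kronecker, trace_one, hσ₁tr, hσ₂tr]
    simp [mul_comm]
  have hw : a * t₁ + b * t₂ = 1 := by
    have e3 : ((a * t₁ + b * t₂ : ℝ) : ℂ) * (d₂ : ℂ) = 1 * (d₂ : ℂ) := by
      have := e1.symm.trans e2
      push_cast at this ⊢
      linear_combination -this
    have := mul_right_cancel₀ hd₂0 e3
    exact_mod_cast this
  -- T is in the open segment between X₁ and X₂
  have hmem : T ∈ openSegment ℝ X₁ X₂ := by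
    refine ⟨a * t₁, b * t₂, by positivity, by positivity, hw, ?_⟩
    funext i
    have : ((a * t₁) • X₁ + (b * t₂) • X₂) i = (a * t₁) • X₁ i + (b * t₂) • X₂ i := rfl
    rw [this]
    have hr1 : ((a * t₁) • X₁ i : Matrix _ _ ℂ) = ((a * t₁ : ℝ) : ℂ) • X₁ i := by
      ext x y; simp [Matrix.smul_apply, Complex.real_smul]
    have hr2 : ((b * t₂) • X₂ i : Matrix _ _ ℂ) = ((b * t₂ : ℝ) : ℂ) • X₂ i := by
      ext x y; simp [Matrix.smul_apply, Complex.real_smul]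
    rw [hr1, hr2, ← hTeq i]
  obtain ⟨hXT₁, hXT₂⟩ := hTex X₁ ⟨hX₁psd, σ₁, hσ₁psd, hσ₁tr, hσ₁sum⟩
    X₂ ⟨hX₂psd, σ₂, hσ₂psd, hσ₂tr, hσ₂sum⟩ hmem
  -- recover W₁ and W₂
  have hWrec : ∀ (W : Fin M → Matrix (Fin d₂ × Fin d₁) (Fin d₂ × Fin d₁) ℂ) (t : ℝ),
      (∀ i, (c : ℂ)⁻¹ • (((1 : Matrix (Fin d₂) (Fin d₂) ℂ) ⊗ₖ Bi) * W i *
        ((1 : Matrix (Fin d₂) (Fin d₂) ℂ) ⊗ₖ Biᴴ)) = (t : ℂ) • T i) →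
      W = fun i => (t : ℂ) • T' i := by
    intro W t hWt
    funext i
    have hcc : (c : ℂ)⁻¹ ≠ 0 := inv_ne_zero hc0
    have h1 := cancel_conj (B := Bi) (Bi := B) hBBi hBiB hcc (W i)
    rw [inv_inv] at h1
    conv_lhs => rw [← h1]
    rw [hWt i, Matrix.mul_smul, Matrix.smul_mul, smul_comm ((c : ℂ)) ((t : ℂ)), ← hrel i]
  have hW₁eq : W₁ = fun i => (t₁ : ℂ) • T' i :=
    hWrec W₁ t₁ (fun i => by rw [hrel₁ i, hXT₁])
  have hW₂eq : W₂ = fun i => (t₂ : ℂ) • T' i :=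
    hWrec W₂ t₂ (fun i => by rw [hrel₂ i, hXT₂])
  -- t = 1 from normalization
  obtain ⟨hT'psd, σ', hσ'psd, hσ'tr, hσ'sum⟩ := hT'
  have hone : ∀ (W : Fin M → Matrix (Fin d₂ × Fin d₁) (Fin d₂ × Fin d₁) ℂ) (t : ℝ),
      IsTester d₂ d₁ M W → W = (fun i => (t : ℂ) • T' i) → W = T' := by
    intro W t hWtest hWeq
    obtain ⟨hWpsd', σW, hσWpsd, hσWtr, hσWsum⟩ := hWtest
    have h1 : (∑ i, W i).trace = (d₂ : ℂ) := by
      rw [hσWsum, trace_kronecker, trace_one, hσWtr, mul_one]; simp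
    have h2 : (∑ i, W i).trace = (t : ℂ) * (d₂ : ℂ) := by
      rw [hWeq]
      rw [← Finset.smul_sum, Matrix.trace_smul, hσ'sum, trace_kronecker, trace_one, hσ'tr,
        smul_eq_mul, mul_one]
      simp
    have ht1 : (t : ℂ) = 1 := by
      have h3 : (t : ℂ) * (d₂ : ℂ) = 1 * (d₂ : ℂ) := by rw [← h2, h1, one_mul]
      exact mul_right_cancel₀ hd₂0 h3
    rw [hWeq]; funext i; rw [ht1, one_smul]
  exact ⟨hone W₁ t₁ hW₁ hW₁eq, hone W₂ t₂ hW₂ hW₂eq⟩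

theorem stmt_6 {d₁ d₂ M : ℕ}
    (ρ U : Matrix (Fin d₁) (Fin d₁) ℂ)
    (hρ : ρ.PosSemidef) (hρtr : ρ.trace = 1) (hρrank : ρ.rank = d₁)
    (hU : U * Uᴴ = 1 ∧ Uᴴ * U = 1)
    (T : Fin M → Matrix (Fin d₂ × Fin d₁) (Fin d₂ × Fin d₁) ℂ)
    (hT : IsTester d₂ d₁ M T)
    (hnorm : ∑ i, T i =
      (1 : Matrix (Fin d₂) (Fin d₂) ℂ) ⊗ₖ ((d₁ : ℂ)⁻¹ • (1 : Matrix (Fin d₁) (Fin d₁) ℂ))) :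
    (∀ i, ((d₁ : ℂ) •
        (((1 : Matrix (Fin d₂) (Fin d₂) ℂ) ⊗ₖ (hρ.sqrt * U)) * T i *
          ((1 : Matrix (Fin d₂) (Fin d₂) ℂ) ⊗ₖ (Uᴴ * hρ.sqrt)))).PosSemidef) ∧
    (∑ i, (d₁ : ℂ) •
        (((1 : Matrix (Fin d₂) (Fin d₂) ℂ) ⊗ₖ (hρ.sqrt * U)) * T i *
          ((1 : Matrix (Fin d₂) (Fin d₂) ℂ) ⊗ₖ (Uᴴ * hρ.sqrt)))
      = (1 : Matrix (Fin d₂) (Fin d₂) ℂ) ⊗ₖ ρ) ∧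
    ((fun i => (d₁ : ℂ) •
        (((1 : Matrix (Fin d₂) (Fin d₂) ℂ) ⊗ₖ (hρ.sqrt * U)) * T i *
          ((1 : Matrix (Fin d₂) (Fin d₂) ℂ) ⊗ₖ (Uᴴ * hρ.sqrt))))
        ∈ {W | IsTester d₂ d₁ M W}.extremePoints ℝ ↔
      T ∈ {W | IsTester d₂ d₁ M W}.extremePoints ℝ) := by
  classical
  obtain ⟨hU1, hU2⟩ := hU
  have hd₁ : 0 < d₁ := by
    rcases Nat.eq_zero_or_pos d₁ with h | h
    · exfalso
      subst h
      rw [Matrix.trace] at hρtr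
      simp at hρtr
    · exact h
  have hd₁0 : (d₁ : ℂ) ≠ 0 := by exact_mod_cast hd₁.ne'
  have hd₁nn : (0 : ℂ) ≤ (d₁ : ℂ) := by
    have h : ((d₁ : ℝ) : ℂ) = (d₁ : ℂ) := by push_cast; rfl
    rw [← h]
    exact Complex.zero_le_real.mpr (by positivity)
  -- ρ is invertible
  have hρu : IsUnit ρ := by
    refine Matrix.mulVec_injective_iff_isUnit.mp ?_
    have hsurj : Function.Surjective ρ.mulVecLin := by
      rw [← LinearMap.range_eq_top]
      apply Submodule.eq_top_of_finrank_eq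
      rw [Module.finrank_pi, Fintype.card_fin]
      exact hρrank
    exact (LinearMap.injective_iff_surjective).mpr hsurj
  have hSH : hρ.sqrtᴴ = hρ.sqrt := sqrt_herm' hρ
  have hSS : hρ.sqrt * hρ.sqrt = ρ := sqrt_mul_self' hρ
  have hdetS : IsUnit hρ.sqrt.det := by
    have h := hρu
    rw [Matrix.isUnit_iff_isUnit_det, ← hSS, Matrix.det_mul] at h
    exact isUnit_of_mul_isUnit_left h
  have hSSi : hρ.sqrt * hρ.sqrt⁻¹ = 1 := Matrix.mul_nonsing_inv _ hdetS
  have hSiS : hρ.sqrt⁻¹ * hρ.sqrt = 1 := Matrix.nonsing_inv_mul _ hdetS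
  have hBBi : (hρ.sqrt * U) * (Uᴴ * hρ.sqrt⁻¹) = 1 := by
    have h : (hρ.sqrt * U) * (Uᴴ * hρ.sqrt⁻¹) = hρ.sqrt * (U * Uᴴ) * hρ.sqrt⁻¹ := by
      simp only [Matrix.mul_assoc]
    rw [h, hU1, Matrix.mul_one, hSSi]
  have hBiB : (Uᴴ * hρ.sqrt⁻¹) * (hρ.sqrt * U) = 1 := by
    have h : (Uᴴ * hρ.sqrt⁻¹) * (hρ.sqrt * U) = Uᴴ * (hρ.sqrt⁻¹ * hρ.sqrt) * U := by
      simp only [Matrix.mul_assoc]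
    rw [h, hSiS, Matrix.mul_one, hU2]
  have hBH : (hρ.sqrt * U)ᴴ = Uᴴ * hρ.sqrt := by rw [conjTranspose_mul, hSH]
  -- first conjunct
  have hpsd : ∀ i, ((d₁ : ℂ) •
      (((1 : Matrix (Fin d₂) (Fin d₂) ℂ) ⊗ₖ (hρ.sqrt * U)) * T i *
        ((1 : Matrix (Fin d₂) (Fin d₂) ℂ) ⊗ₖ (Uᴴ * hρ.sqrt)))).PosSemidef := by
    intro i
    have hC : ((1 : Matrix (Fin d₂) (Fin d₂) ℂ) ⊗ₖ (Uᴴ * hρ.sqrt))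
        = (((1 : Matrix (Fin d₂) (Fin d₂) ℂ) ⊗ₖ (hρ.sqrt * U)))ᴴ := by
      rw [kron_conjT, conjTranspose_one, hBH]
    rw [hC]
    exact psd_smul ((hT.1 i).mul_mul_conjTranspose_same _) hd₁nn
  -- second conjunct
  have hsum2 : ∑ i, (d₁ : ℂ) •
      (((1 : Matrix (Fin d₂) (Fin d₂) ℂ) ⊗ₖ (hρ.sqrt * U)) * T i *
        ((1 : Matrix (Fin d₂) (Fin d₂) ℂ) ⊗ₖ (Uᴴ * hρ.sqrt)))
      = (1 : Matrix (Fin d₂) (Fin d₂) ℂ) ⊗ₖ ρ := by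
    rw [← Finset.smul_sum, sum_PWQ, hnorm, kron_one_mul, kron_one_mul]
    have hmid : (hρ.sqrt * U) * ((d₁ : ℂ)⁻¹ • (1 : Matrix (Fin d₁) (Fin d₁) ℂ)) * (Uᴴ * hρ.sqrt)
        = (d₁ : ℂ)⁻¹ • ρ := by
      rw [Matrix.mul_smul, Matrix.mul_one, Matrix.smul_mul]
      refine congrArg _ ?_
      have h : hρ.sqrt * U * (Uᴴ * hρ.sqrt) = hρ.sqrt * (U * Uᴴ) * hρ.sqrt := by
        simp only [Matrix.mul_assoc]
      rw [h, hU1, Matrix.mul_one, hSS]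
    rw [hmid, Matrix.kronecker_smul, smul_smul, mul_inv_cancel₀ hd₁0, one_smul]
  refine ⟨hpsd, hsum2, ?_⟩
  rcases Nat.eq_zero_or_pos d₂ with hd₂ | hd₂
  · -- degenerate case d₂ = 0
    subst hd₂
    have hsub : ∀ X Y : Fin M → Matrix (Fin 0 × Fin d₁) (Fin 0 × Fin d₁) ℂ, X = Y := by
      intro X Y
      funext i
      ext x y
      exact x.1.elim0
    rw [hsub (fun i => (d₁ : ℂ) •
        (((1 : Matrix (Fin 0) (Fin 0) ℂ) ⊗ₖ (hρ.sqrt * U)) * T i *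
          ((1 : Matrix (Fin 0) (Fin 0) ℂ) ⊗ₖ (Uᴴ * hρ.sqrt)))) T]
  · -- main case
    have hF : IsTester d₂ d₁ M (fun i => (d₁ : ℂ) •
        (((1 : Matrix (Fin d₂) (Fin d₂) ℂ) ⊗ₖ (hρ.sqrt * U)) * T i *
          ((1 : Matrix (Fin d₂) (Fin d₂) ℂ) ⊗ₖ (Uᴴ * hρ.sqrt)))) :=
      ⟨hpsd, ρ, hρ, hρtr, hsum2⟩
    have hd₁R : (0 : ℝ) < (d₁ : ℝ) := by exact_mod_cast hd₁
    have hrelF : ∀ i, (d₁ : ℂ) •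
        (((1 : Matrix (Fin d₂) (Fin d₂) ℂ) ⊗ₖ (hρ.sqrt * U)) * T i *
          ((1 : Matrix (Fin d₂) (Fin d₂) ℂ) ⊗ₖ (Uᴴ * hρ.sqrt)))
        = (((d₁ : ℝ)) : ℂ) • (((1 : Matrix (Fin d₂) (Fin d₂) ℂ) ⊗ₖ (hρ.sqrt * U)) * T i *
          ((1 : Matrix (Fin d₂) (Fin d₂) ℂ) ⊗ₖ (hρ.sqrt * U)ᴴ)) := by
      intro i
      rw [hBH]
      norm_cast
    constructor
    · intro hFex
      have hrelInv : ∀ i, T i = (Complex.ofReal ((d₁ : ℝ)⁻¹)) •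
          (((1 : Matrix (Fin d₂) (Fin d₂) ℂ) ⊗ₖ (Uᴴ * hρ.sqrt⁻¹)) *
            ((d₁ : ℂ) • (((1 : Matrix (Fin d₂) (Fin d₂) ℂ) ⊗ₖ (hρ.sqrt * U)) * T i *
              ((1 : Matrix (Fin d₂) (Fin d₂) ℂ) ⊗ₖ (Uᴴ * hρ.sqrt)))) *
            ((1 : Matrix (Fin d₂) (Fin d₂) ℂ) ⊗ₖ (Uᴴ * hρ.sqrt⁻¹)ᴴ)) := by
        intro i
        rw [Complex.ofReal_inv, Complex.ofReal_natCast,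
          show Uᴴ * hρ.sqrt = (hρ.sqrt * U)ᴴ from hBH.symm]
        exact (cancel_conj hBiB hBBi hd₁0 (T i)).symm
      exact key_dir hd₂ (inv_pos.mpr hd₁R) hBiB hBBi
        (T := fun i => (d₁ : ℂ) •
          (((1 : Matrix (Fin d₂) (Fin d₂) ℂ) ⊗ₖ (hρ.sqrt * U)) * T i *
            ((1 : Matrix (Fin d₂) (Fin d₂) ℂ) ⊗ₖ (Uᴴ * hρ.sqrt)))) (T' := T)
        hrelInv hT hFex
    · intro hTex
      exact key_dir hd₂ hd₁R hBBi hBiB (T := T) (T' := fun i => (d₁ : ℂ) •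
          (((1 : Matrix (Fin d₂) (Fin d₂) ℂ) ⊗ₖ (hρ.sqrt * U)) * T i *
            ((1 : Matrix (Fin d₂) (Fin d₂) ℂ) ⊗ₖ (Uᴴ * hρ.sqrt)))) hrelF hF hTex
end

section
/- If there exists an extremal quantum 1-tester with M outcomes on ℋ₂⊗ℋ₁ whose normalization is I₂⊗ρ with rank(ρ) = r, then for every density operator ρ′ on ℋ₁ with rank(ρ′) = r there exists an extremal quantum 1-tester with M outcomes on ℋ₂⊗ℋ₁ whose normalization is I₂⊗ρ′. -/
open Matrix Kronecker
open scoped ComplexOrder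

namespace Stmt7Aux

set_option linter.unusedSectionVars false

variable {m n : Type*} [Fintype m] [DecidableEq m] [Fintype n] [DecidableEq n]

/-- row-permutation-with-weights matrix -/
noncomputable def permDiag (σ : Equiv.Perm m) (v : m → ℝ) : Matrix m m ℂ :=
  Matrix.of fun i j => if σ i = j then (v i : ℂ) else 0

lemma permDiag_mul (σ τ : Equiv.Perm m) (v w : m → ℝ) :
    permDiag σ v * permDiag τ w = permDiag (σ.trans τ) fun i => v i * w (σ i) := by
  ext i k
  simp only [permDiag, Matrix.of_apply, Matrix.mul_apply, ite_mul, zero_mul,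
    Equiv.trans_apply, mul_ite, mul_zero, Complex.ofReal_mul]
  rw [Finset.sum_eq_single (σ i)]
  · simp
  · intro b _ hb
    rw [if_neg (Ne.symm hb), ite_self]
  · intro hmem
    exact absurd (Finset.mem_univ _) hmem

lemma permDiag_refl (v : m → ℝ) :
    permDiag (Equiv.refl m) v = Matrix.diagonal fun i => (v i : ℂ) := by
  ext i j
  simp [permDiag, Matrix.diagonal_apply]
  rfl

lemma permDiag_conjT (σ : Equiv.Perm m) (v : m → ℝ) :
    (permDiag σ v)ᴴ = permDiag σ.symm fun j => v (σ.symm j) := by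
  ext j i
  by_cases h : σ i = j
  · subst h
    simp [permDiag, Matrix.conjTranspose_apply, Complex.conj_ofReal]
  · have h' : σ.symm j ≠ i := fun hh => h (by rw [← hh, Equiv.apply_symm_apply])
    simp [permDiag, Matrix.conjTranspose_apply, h, h']

lemma sandwich (U V C X D : Matrix m m ℂ) (hU : Uᴴ * U = 1) :
    (V * C * Uᴴ) * (U * X * D) = V * (C * X) * D := by
  simp only [Matrix.mul_assoc]
  rw [← Matrix.mul_assoc Uᴴ U, hU, Matrix.one_mul]

lemma kernel_le {A B : Matrix m m ℂ} (hA : A.PosSemidef) (hd : (B - A).PosSemidef)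
    {v : m → ℂ} (hv : B *ᵥ v = 0) : A *ᵥ v = 0 := by
  rw [← hA.dotProduct_mulVec_zero_iff]
  have h1 : star v ⬝ᵥ A *ᵥ v + star v ⬝ᵥ (B - A) *ᵥ v = 0 := by
    rw [← dotProduct_add, ← Matrix.add_mulVec]
    simp [hv]
  have h2 := hA.dotProduct_mulVec_nonneg v
  have h3 := hd.dotProduct_mulVec_nonneg v
  have hle : star v ⬝ᵥ A *ᵥ v ≤ 0 := by
    calc star v ⬝ᵥ A *ᵥ v ≤ star v ⬝ᵥ A *ᵥ v + star v ⬝ᵥ (B - A) *ᵥ v :=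
      le_add_of_nonneg_right h3
    _ = 0 := h1
  exact le_antisymm hle h2

lemma mul_eq_zero_of_cols {A B R : Matrix m m ℂ}
    (hker : ∀ v, B *ᵥ v = 0 → A *ᵥ v = 0) (hBR : B * R = 0) : A * R = 0 := by
  ext i j
  have hv : B *ᵥ (fun k => R k j) = 0 := by
    funext i'
    have := congrFun (congrFun hBR i') j
    simpa [Matrix.mul_apply, Matrix.mulVec, dotProduct] using this
  have := congrFun (hker _ hv) i
  simpa [Matrix.mul_apply, Matrix.mulVec, dotProduct] using this

lemma absorb {A Q : Matrix m m ℂ} (hA : A.IsHermitian) (hQ : Qᴴ = Q)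
    (h : A * (1 - Q) = 0) : Q * A * Q = A := by
  have hAQ : A * Q = A := by
    have h' := h
    rw [Matrix.mul_sub, Matrix.mul_one, sub_eq_zero] at h'
    exact h'.symm
  have hQA : Q * A = A := by
    calc Q * A = Qᴴ * Aᴴ := by rw [hQ, hA.eq]
    _ = (A * Q)ᴴ := (Matrix.conjTranspose_mul A Q).symm
    _ = Aᴴ := by rw [hAQ]
    _ = A := hA.eq
  rw [hQA, hAQ]

lemma real_smul_eq (t : ℝ) (X : Matrix m m ℂ) : t • X = (t : ℂ) • X := by
  ext i j
  simp [Complex.real_smul]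

lemma psd_smul {t : ℝ} (ht : 0 ≤ t) {X : Matrix m m ℂ} (hX : X.PosSemidef) :
    (t • X).PosSemidef := by
  rw [real_smul_eq]
  refine .of_dotProduct_mulVec_nonneg ?_ ?_
  · unfold Matrix.IsHermitian
    rw [Matrix.conjTranspose_smul, hX.1.eq]
    congr 1
    simp [Complex.star_def, Complex.conj_ofReal]
  · intro x
    rw [Matrix.smul_mulVec, dotProduct_smul, smul_eq_mul]
    exact mul_nonneg (by exact_mod_cast ht) (hX.dotProduct_mulVec_nonneg x)

lemma psd_sum {ι : Type*} (s : Finset ι) (f : ι → Matrix m m ℂ)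
    (h : ∀ i ∈ s, (f i).PosSemidef) : (∑ i ∈ s, f i).PosSemidef :=
  Finset.sum_induction f _ (fun _ _ ha hb => ha.add hb) Matrix.PosSemidef.zero h

lemma psd_diag_nonneg {X : Matrix m m ℂ} (hX : X.PosSemidef) (i : m) : 0 ≤ X i i := by
  have := hX.dotProduct_mulVec_nonneg (Pi.single i 1)
  simpa [Matrix.mulVec_single, dotProduct, Pi.single_apply, ite_mul, mul_ite] using this

lemma psd_trace_nonneg {X : Matrix m m ℂ} (hX : X.PosSemidef) : 0 ≤ X.trace := by
  apply Finset.sum_nonneg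
  intro i _
  exact psd_diag_nonneg hX i

lemma psd_trace_zero {X : Matrix m m ℂ} (hX : X.PosSemidef) (h : X.trace = 0) : X = 0 := by
  have hdiag : ∀ i, X i i = 0 := by
    have := (Finset.sum_eq_zero_iff_of_nonneg (fun i _ => psd_diag_nonneg hX i)).mp h
    exact fun i => this i (Finset.mem_univ i)
  have hcol : ∀ i, X *ᵥ Pi.single i 1 = 0 := by
    intro i
    rw [← hX.dotProduct_mulVec_zero_iff]
    simpa [Matrix.mulVec_single, dotProduct, Pi.single_apply, ite_mul, mul_ite] using hdiag i
  ext k i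
  have := congrFun (hcol i) k
  simpa [Matrix.mulVec_single] using this

lemma kron_conjT (A : Matrix n n ℂ) (B : Matrix m m ℂ) : (A ⊗ₖ B)ᴴ = Aᴴ ⊗ₖ Bᴴ := by
  ext ⟨i, j⟩ ⟨k, l⟩
  simp [Matrix.conjTranspose_apply, Matrix.kroneckerMap_apply, star_mul', mul_comm]

lemma one_kron_mul (X Y : Matrix m m ℂ) :
    ((1 : Matrix n n ℂ) ⊗ₖ X) * ((1 : Matrix n n ℂ) ⊗ₖ Y) = (1 : Matrix n n ℂ) ⊗ₖ (X * Y) := by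
  rw [← Matrix.mul_kronecker_mul, Matrix.one_mul]

lemma one_kron_smul (t : ℝ) (X : Matrix m m ℂ) :
    (1 : Matrix n n ℂ) ⊗ₖ (t • X) = t • ((1 : Matrix n n ℂ) ⊗ₖ X) := by
  ext ⟨i, j⟩ ⟨k, l⟩
  simp [Matrix.kroneckerMap_apply, Complex.real_smul]
  ring

lemma one_kron_add (X Y : Matrix m m ℂ) :
    (1 : Matrix n n ℂ) ⊗ₖ (X + Y) = (1 : Matrix n n ℂ) ⊗ₖ X + (1 : Matrix n n ℂ) ⊗ₖ Y := by
  ext ⟨i, j⟩ ⟨k, l⟩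
  simp [Matrix.kroneckerMap_apply, mul_add]

lemma one_kron_sub (X Y : Matrix m m ℂ) :
    (1 : Matrix n n ℂ) ⊗ₖ (X - Y) = (1 : Matrix n n ℂ) ⊗ₖ X - (1 : Matrix n n ℂ) ⊗ₖ Y := by
  ext ⟨i, j⟩ ⟨k, l⟩
  simp [Matrix.kroneckerMap_apply, mul_sub]

lemma one_kron_psd {X : Matrix m m ℂ} (hX : X.PosSemidef) :
    ((1 : Matrix n n ℂ) ⊗ₖ X).PosSemidef := by
  exact Matrix.PosSemidef.one.kronecker hX

lemma kron_inj {X Y : Matrix m m ℂ} (j : n) (h : (1 : Matrix n n ℂ) ⊗ₖ X = 1 ⊗ₖ Y) : X = Y := by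
  ext a c
  have := congrFun (congrFun h (j, a)) (j, c)
  simpa [Matrix.kroneckerMap_apply, Matrix.one_apply] using this

lemma conj_comp {p : Type*} [Fintype p] (P Q X : Matrix p p ℂ) :
    P * (Q * X * Qᴴ) * Pᴴ = (P * Q) * X * (P * Q)ᴴ := by
  simp only [Matrix.conjTranspose_mul, Matrix.mul_assoc]

lemma one_kron_conj (S X : Matrix m m ℂ) :
    ((1 : Matrix n n ℂ) ⊗ₖ S) * ((1 : Matrix n n ℂ) ⊗ₖ X) * ((1 : Matrix n n ℂ) ⊗ₖ S)ᴴ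
      = (1 : Matrix n n ℂ) ⊗ₖ (S * X * Sᴴ) := by
  rw [kron_conjT, Matrix.conjTranspose_one, one_kron_mul, one_kron_mul]

end Stmt7Aux

theorem stmt_7 {d₁ d₂ M r : ℕ}
    (h : ∃ (T : Fin M → Matrix (Fin d₂ × Fin d₁) (Fin d₂ × Fin d₁) ℂ)
          (ρ : Matrix (Fin d₁) (Fin d₁) ℂ),
        (∀ i, (T i).PosSemidef) ∧ ρ.PosSemidef ∧ ρ.trace = 1 ∧ ρ.rank = r ∧
        ∑ i, T i = (1 : Matrix (Fin d₂) (Fin d₂) ℂ) ⊗ₖ ρ ∧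
        T ∈ {W | IsTester d₂ d₁ M W}.extremePoints ℝ) :
    ∀ ρ' : Matrix (Fin d₁) (Fin d₁) ℂ, ρ'.PosSemidef → ρ'.trace = 1 → ρ'.rank = r →
      ∃ T' : Fin M → Matrix (Fin d₂ × Fin d₁) (Fin d₂ × Fin d₁) ℂ,
        (∀ i, (T' i).PosSemidef) ∧
        ∑ i, T' i = (1 : Matrix (Fin d₂) (Fin d₂) ℂ) ⊗ₖ ρ' ∧
        T' ∈ {W | IsTester d₂ d₁ M W}.extremePoints ℝ := by
  classical
  obtain ⟨T, ρ, hTpsd, hρ, hρtr, hρrank, hTsum, hText⟩ := h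
  intro ρ' hρ' hρ'tr hρ'rank
  have hH : ρ.IsHermitian := hρ.1
  have hH' : ρ'.IsHermitian := hρ'.1
  set g : Fin d₁ → ℝ := hH.eigenvalues with hgdef
  set g' : Fin d₁ → ℝ := hH'.eigenvalues with hg'def
  set U : Matrix (Fin d₁) (Fin d₁) ℂ := (hH.eigenvectorUnitary : Matrix (Fin d₁) (Fin d₁) ℂ)
    with hUdef
  set U' : Matrix (Fin d₁) (Fin d₁) ℂ := (hH'.eigenvectorUnitary : Matrix (Fin d₁) (Fin d₁) ℂ)
    with hU'def
  have hU1 : Uᴴ * U = 1 := by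
    rw [hUdef, ← Matrix.star_eq_conjTranspose]
    exact Matrix.mem_unitaryGroup_iff'.mp hH.eigenvectorUnitary.2
  have hU'1 : U'ᴴ * U' = 1 := by
    rw [hU'def, ← Matrix.star_eq_conjTranspose]
    exact Matrix.mem_unitaryGroup_iff'.mp hH'.eigenvectorUnitary.2
  have hρspec : ρ = U * Matrix.diagonal (fun i => (g i : ℂ)) * Uᴴ := by
    simpa [hUdef, hgdef, Matrix.star_eq_conjTranspose, Function.comp_def]
      using hH.spectral_theorem
  have hρ'spec : ρ' = U' * Matrix.diagonal (fun i => (g' i : ℂ)) * U'ᴴ := by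
    simpa [hU'def, hg'def, Matrix.star_eq_conjTranspose, Function.comp_def]
      using hH'.spectral_theorem
  have hgnn : ∀ i, 0 ≤ g i := fun i => hρ.eigenvalues_nonneg i
  have hg'nn : ∀ i, 0 ≤ g' i := fun i => hρ'.eigenvalues_nonneg i
  -- a permutation matching the supports of the spectra
  have hcard : Fintype.card {i // g' i ≠ 0} = Fintype.card {i // g i ≠ 0} := by
    have h1 := hH.rank_eq_card_non_zero_eigs
    have h2 := hH'.rank_eq_card_non_zero_eigs
    rw [hρrank] at h1
    rw [hρ'rank] at h2
    rw [← hgdef] at h1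
    rw [← hg'def] at h2
    omega
  set e : {i // g' i ≠ 0} ≃ {i // g i ≠ 0} := Fintype.equivOfCardEq hcard with hedef
  set σ : Equiv.Perm (Fin d₁) := e.extendSubtype with hσdef
  have hσ : ∀ i, g' i ≠ 0 ↔ g (σ i) ≠ 0 := by
    intro i
    rw [hσdef]
    constructor
    · intro hi
      exact e.extendSubtype_mem i hi
    · intro hgi
      by_contra hi
      exact e.extendSubtype_not_mem i (fun hne => hne hi) hgi
  have hσ' : ∀ j, g j ≠ 0 ↔ g' (σ.symm j) ≠ 0 := by
    intro j
    have := hσ (σ.symm j)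
    rw [Equiv.apply_symm_apply] at this
    exact this.symm
  set c : Fin d₁ → ℝ := fun i => Real.sqrt (g' i) / Real.sqrt (g (σ i)) with hcdef
  set b : Fin d₁ → ℝ := fun j => Real.sqrt (g j) / Real.sqrt (g' (σ.symm j)) with hbdef
  have hceq : ∀ i, c i * g (σ i) * c i = g' i := by
    intro i
    by_cases hi : g' i = 0
    · simp [hcdef, hi]
    · have hgi : g (σ i) ≠ 0 := (hσ i).mp hi
      have hcc : c i * c i = g' i / g (σ i) := by
        rw [hcdef]
        dsimp only
        rw [div_mul_div_comm, Real.mul_self_sqrt (hg'nn i), Real.mul_self_sqrt (hgnn _)]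
      calc c i * g (σ i) * c i = c i * c i * g (σ i) := by ring
        _ = g' i / g (σ i) * g (σ i) := by rw [hcc]
        _ = g' i := div_mul_cancel₀ _ hgi
  have hbeq : ∀ j, b j * g' (σ.symm j) * b j = g j := by
    intro j
    by_cases hj : g j = 0
    · simp [hbdef, hj]
    · have hgj : g' (σ.symm j) ≠ 0 := (hσ' j).mp hj
      have hbb : b j * b j = g j / g' (σ.symm j) := by
        rw [hbdef]
        dsimp only
        rw [div_mul_div_comm, Real.mul_self_sqrt (hgnn j), Real.mul_self_sqrt (hg'nn _)]
      calc b j * g' (σ.symm j) * b j = b j * b j * g' (σ.symm j) := by ring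
        _ = g j / g' (σ.symm j) * g' (σ.symm j) := by rw [hbb]
        _ = g j := div_mul_cancel₀ _ hgj
  have hcb : ∀ i, c i * b (σ i) = if g' i = 0 then 0 else 1 := by
    intro i
    by_cases hi : g' i = 0
    · simp [hcdef, hi]
    · have hgi : g (σ i) ≠ 0 := (hσ i).mp hi
      rw [if_neg hi, hcdef, hbdef]
      dsimp only
      rw [Equiv.symm_apply_apply]
      have h1 : Real.sqrt (g' i) ≠ 0 :=
        Real.sqrt_ne_zero'.mpr (lt_of_le_of_ne (hg'nn i) (Ne.symm hi))
      have h2 : Real.sqrt (g (σ i)) ≠ 0 :=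
        Real.sqrt_ne_zero'.mpr (lt_of_le_of_ne (hgnn _) (Ne.symm hgi))
      rw [div_mul_div_comm, mul_comm (Real.sqrt (g' i)), div_self (mul_ne_zero h2 h1)]
  have hbc : ∀ j, b j * c (σ.symm j) = if g j = 0 then 0 else 1 := by
    intro j
    by_cases hj : g j = 0
    · simp [hbdef, hj]
    · have hgj : g' (σ.symm j) ≠ 0 := (hσ' j).mp hj
      rw [if_neg hj, hcdef, hbdef]
      dsimp only
      rw [Equiv.apply_symm_apply]
      have h1 : Real.sqrt (g j) ≠ 0 :=
        Real.sqrt_ne_zero'.mpr (lt_of_le_of_ne (hgnn j) (Ne.symm hj))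
      have h2 : Real.sqrt (g' (σ.symm j)) ≠ 0 :=
        Real.sqrt_ne_zero'.mpr (lt_of_le_of_ne (hg'nn _) (Ne.symm hgj))
      rw [div_mul_div_comm, mul_comm (Real.sqrt (g j)), div_self (mul_ne_zero h2 h1)]
  -- the intertwining operators
  set Cm : Matrix (Fin d₁) (Fin d₁) ℂ := Stmt7Aux.permDiag σ c with hCdef
  set Cm' : Matrix (Fin d₁) (Fin d₁) ℂ := Stmt7Aux.permDiag σ.symm b with hC'def
  set S : Matrix (Fin d₁) (Fin d₁) ℂ := U' * Cm * Uᴴ with hSdef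
  set S' : Matrix (Fin d₁) (Fin d₁) ℂ := U * Cm' * U'ᴴ with hS'def
  set eQ : Fin d₁ → ℝ := fun j => if g j = 0 then 0 else 1 with heQdef
  set eQ' : Fin d₁ → ℝ := fun i => if g' i = 0 then 0 else 1 with heQ'def
  set Q : Matrix (Fin d₁) (Fin d₁) ℂ := U * Matrix.diagonal (fun j => (eQ j : ℂ)) * Uᴴ with hQdef
  set Q' : Matrix (Fin d₁) (Fin d₁) ℂ := U' * Matrix.diagonal (fun i => (eQ' i : ℂ)) * U'ᴴ
    with hQ'def
  have hCGC : Cm * Matrix.diagonal (fun i => (g i : ℂ)) * Cmᴴ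
      = Matrix.diagonal (fun i => (g' i : ℂ)) := by
    rw [hCdef, ← Stmt7Aux.permDiag_refl g, Stmt7Aux.permDiag_conjT, Stmt7Aux.permDiag_mul,
      Stmt7Aux.permDiag_mul]
    ext i k
    simp only [Stmt7Aux.permDiag, Matrix.of_apply, Equiv.trans_apply, Equiv.refl_apply,
      Equiv.symm_apply_apply, Matrix.diagonal_apply]
    rw [hceq i]
  have hC'G'C' : Cm' * Matrix.diagonal (fun i => (g' i : ℂ)) * Cm'ᴴ
      = Matrix.diagonal (fun i => (g i : ℂ)) := by
    rw [hC'def, ← Stmt7Aux.permDiag_refl g', Stmt7Aux.permDiag_conjT, Stmt7Aux.permDiag_mul,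
      Stmt7Aux.permDiag_mul]
    ext j k
    simp only [Stmt7Aux.permDiag, Matrix.of_apply, Equiv.trans_apply, Equiv.refl_apply,
      Equiv.symm_symm, Equiv.apply_symm_apply, Matrix.diagonal_apply]
    rw [hbeq j]
  have hCC' : Cm * Cm' = Matrix.diagonal (fun i => (eQ' i : ℂ)) := by
    rw [hCdef, hC'def, Stmt7Aux.permDiag_mul]
    ext i k
    simp only [Stmt7Aux.permDiag, Matrix.of_apply, Equiv.trans_apply,
      Equiv.symm_apply_apply, Matrix.diagonal_apply]
    rw [hcb i]
  have hC'C : Cm' * Cm = Matrix.diagonal (fun j => (eQ j : ℂ)) := by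
    rw [hCdef, hC'def, Stmt7Aux.permDiag_mul]
    ext j k
    simp only [Stmt7Aux.permDiag, Matrix.of_apply, Equiv.trans_apply,
      Equiv.apply_symm_apply, Matrix.diagonal_apply]
    rw [hbc j]
  have hSH : Sᴴ = U * Cmᴴ * U'ᴴ := by
    rw [hSdef]
    simp only [Matrix.conjTranspose_mul, Matrix.conjTranspose_conjTranspose, Matrix.mul_assoc]
  have hS'H : S'ᴴ = U' * Cm'ᴴ * Uᴴ := by
    rw [hS'def]
    simp only [Matrix.conjTranspose_mul, Matrix.conjTranspose_conjTranspose, Matrix.mul_assoc]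
  have hF1 : S * ρ * Sᴴ = ρ' := by
    rw [hSH, hρspec, hSdef,
      Stmt7Aux.sandwich U U' Cm (Matrix.diagonal (fun i => (g i : ℂ))) Uᴴ hU1,
      Stmt7Aux.sandwich U U' (Cm * Matrix.diagonal (fun i => (g i : ℂ))) Cmᴴ U'ᴴ hU1, hCGC]
    exact hρ'spec.symm
  have hF2 : S' * ρ' * S'ᴴ = ρ := by
    rw [hS'H, hρ'spec, hS'def,
      Stmt7Aux.sandwich U' U Cm' (Matrix.diagonal (fun i => (g' i : ℂ))) U'ᴴ hU'1,
      Stmt7Aux.sandwich U' U (Cm' * Matrix.diagonal (fun i => (g' i : ℂ))) Cm'ᴴ Uᴴ hU'1, hC'G'C']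
    exact hρspec.symm
  have hQ'SS' : S * S' = Q' := by
    rw [hSdef, hS'def, Stmt7Aux.sandwich U U' Cm Cm' U'ᴴ hU1, hCC', hQ'def]
  have hQSS : S' * S = Q := by
    rw [hSdef, hS'def, Stmt7Aux.sandwich U' U Cm' Cm Uᴴ hU'1, hC'C, hQdef]
  have hdiagH : ∀ v : Fin d₁ → ℝ,
      (Matrix.diagonal (fun i => (v i : ℂ)))ᴴ = Matrix.diagonal (fun i => (v i : ℂ)) := by
    intro v
    ext i j
    simp only [Matrix.conjTranspose_apply, Matrix.diagonal_apply]
    rcases eq_or_ne j i with rfl | hij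
    · simp [Complex.conj_ofReal]
    · rw [if_neg hij, if_neg (fun hh => hij hh.symm)]
      simp
  have hQH : Qᴴ = Q := by
    rw [hQdef]
    simp only [Matrix.conjTranspose_mul, Matrix.conjTranspose_conjTranspose, hdiagH eQ,
      Matrix.mul_assoc]
  have hQ'H : Q'ᴴ = Q' := by
    rw [hQ'def]
    simp only [Matrix.conjTranspose_mul, Matrix.conjTranspose_conjTranspose, hdiagH eQ',
      Matrix.mul_assoc]
  have hρ'Q' : ρ' * Q' = ρ' := by
    rw [hρ'spec, hQ'def,
      Stmt7Aux.sandwich U' U' (Matrix.diagonal (fun i => (g' i : ℂ)))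
        (Matrix.diagonal (fun i => (eQ' i : ℂ))) U'ᴴ hU'1,
      Matrix.diagonal_mul_diagonal]
    have hde : (fun i => (g' i : ℂ) * (eQ' i : ℂ)) = fun i => (g' i : ℂ) := by
      funext i
      rcases eq_or_ne (g' i) 0 with h0 | h0 <;> simp [heQ'def, h0]
    rw [hde]
  have hρQ : ρ * Q = ρ := by
    rw [hρspec, hQdef,
      Stmt7Aux.sandwich U U (Matrix.diagonal (fun i => (g i : ℂ)))
        (Matrix.diagonal (fun i => (eQ i : ℂ))) Uᴴ hU1,
      Matrix.diagonal_mul_diagonal]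
    have hde : (fun i => (g i : ℂ) * (eQ i : ℂ)) = fun i => (g i : ℂ) := by
      funext i
      rcases eq_or_ne (g i) 0 with h0 | h0 <;> simp [heQdef, h0]
    rw [hde]
  -- the new tester
  set T' : Fin M → Matrix (Fin d₂ × Fin d₁) (Fin d₂ × Fin d₁) ℂ :=
    fun i => ((1 : Matrix (Fin d₂) (Fin d₂) ℂ) ⊗ₖ S) * T i
      * (((1 : Matrix (Fin d₂) (Fin d₂) ℂ) ⊗ₖ S))ᴴ with hT'def
  have hT'psd : ∀ i, (T' i).PosSemidef := fun i => (hTpsd i).mul_mul_conjTranspose_same _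
  have hT'sum : ∑ i, T' i = (1 : Matrix (Fin d₂) (Fin d₂) ℂ) ⊗ₖ ρ' := by
    calc ∑ i, T' i
        = ((1 : Matrix (Fin d₂) (Fin d₂) ℂ) ⊗ₖ S) * (∑ i, T i)
          * (((1 : Matrix (Fin d₂) (Fin d₂) ℂ) ⊗ₖ S))ᴴ := by
          rw [hT'def, ← Finset.sum_mul, ← Finset.mul_sum]
      _ = ((1 : Matrix (Fin d₂) (Fin d₂) ℂ) ⊗ₖ S) * ((1 : Matrix (Fin d₂) (Fin d₂) ℂ) ⊗ₖ ρ)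
          * (((1 : Matrix (Fin d₂) (Fin d₂) ℂ) ⊗ₖ S))ᴴ := by rw [hTsum]
      _ = (1 : Matrix (Fin d₂) (Fin d₂) ℂ) ⊗ₖ (S * ρ * Sᴴ) := Stmt7Aux.one_kron_conj S ρ
      _ = (1 : Matrix (Fin d₂) (Fin d₂) ℂ) ⊗ₖ ρ' := by rw [hF1]
  have hT'mem : T' ∈ {W | IsTester d₂ d₁ M W} := ⟨hT'psd, ρ', hρ', hρ'tr, hT'sum⟩
  refine ⟨T', hT'psd, hT'sum, ?_⟩
  rw [mem_extremePoints] at hText ⊢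
  refine ⟨hT'mem, ?_⟩
  intro A hA B hB hseg
  rcases Nat.eq_zero_or_pos d₂ with hd2 | hd2
  · subst hd2
    have hall : ∀ X Y : Matrix (Fin 0 × Fin d₁) (Fin 0 × Fin d₁) ℂ, X = Y := by
      intro X Y
      ext ⟨x, y⟩ j
      exact x.elim0
    exact ⟨funext fun i => hall _ _, funext fun i => hall _ _⟩
  obtain ⟨a, bb, ha, hbb, hab, hcomb⟩ := hseg
  obtain ⟨hApsd, σA, hσA, hσAtr, hAsum⟩ := hA
  obtain ⟨hBpsd, σB, hσB, hσBtr, hBsum⟩ := hB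
  set j₂ : Fin d₂ := ⟨0, hd2⟩ with hj₂def
  have hcomb' : ∀ i, a • A i + bb • B i = T' i := by
    intro i
    have := congrFun hcomb i
    simpa using this
  have hsplit : a • σA + bb • σB = ρ' := by
    apply Stmt7Aux.kron_inj (n := Fin d₂) j₂
    calc (1 : Matrix (Fin d₂) (Fin d₂) ℂ) ⊗ₖ (a • σA + bb • σB)
        = a • ((1 : Matrix (Fin d₂) (Fin d₂) ℂ) ⊗ₖ σA)
          + bb • ((1 : Matrix (Fin d₂) (Fin d₂) ℂ) ⊗ₖ σB) := by
          rw [Stmt7Aux.one_kron_add, Stmt7Aux.one_kron_smul, Stmt7Aux.one_kron_smul]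
      _ = a • ∑ i, A i + bb • ∑ i, B i := by rw [hAsum, hBsum]
      _ = ∑ i, (a • A i + bb • B i) := by
          rw [Finset.sum_add_distrib, Finset.smul_sum, Finset.smul_sum]
      _ = ∑ i, T' i := Finset.sum_congr rfl fun i _ => hcomb' i
      _ = (1 : Matrix (Fin d₂) (Fin d₂) ℂ) ⊗ₖ ρ' := hT'sum
  have hdiffA : (ρ' - a • σA).PosSemidef := by
    rw [← hsplit, add_sub_cancel_left]
    exact Stmt7Aux.psd_smul hbb.le hσB
  have hdiffB : (ρ' - bb • σB).PosSemidef := by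
    rw [← hsplit, add_sub_cancel_right]
    exact Stmt7Aux.psd_smul ha.le hσA
  -- absorption of the support projections
  have habsσ : ∀ (σX : Matrix (Fin d₁) (Fin d₁) ℂ) (t : ℝ), 0 < t → σX.PosSemidef →
      (ρ' - t • σX).PosSemidef → Q' * σX * Q' = σX := by
    intro σX t ht hσX hdiff
    apply Stmt7Aux.absorb hσX.1 hQ'H
    apply Stmt7Aux.mul_eq_zero_of_cols (B := ρ')
    · intro v hv
      have h1 : (t • σX) *ᵥ v = 0 :=
        Stmt7Aux.kernel_le (Stmt7Aux.psd_smul ht.le hσX) hdiff hv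
      rw [Stmt7Aux.real_smul_eq, Matrix.smul_mulVec] at h1
      have := smul_eq_zero.mp h1
      rcases this with h | h
      · exact absurd h (by exact_mod_cast ht.ne')
      · exact h
    · rw [Matrix.mul_sub, Matrix.mul_one, hρ'Q', sub_self]
  have habsσA : Q' * σA * Q' = σA := habsσ σA a ha hσA hdiffA
  have habsσB : Q' * σB * Q' = σB := habsσ σB bb hbb hσB hdiffB
  have habsfam : ∀ (ρb Qb : Matrix (Fin d₁) (Fin d₁) ℂ), ρb * Qb = ρb → Qbᴴ = Qb →
      ∀ (Xfam : Fin M → Matrix (Fin d₂ × Fin d₁) (Fin d₂ × Fin d₁) ℂ)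
        (σX : Matrix (Fin d₁) (Fin d₁) ℂ) (t : ℝ), 0 < t →
        (∀ i, (Xfam i).PosSemidef) → σX.PosSemidef →
        (∑ i, Xfam i = (1 : Matrix (Fin d₂) (Fin d₂) ℂ) ⊗ₖ σX) →
        (ρb - t • σX).PosSemidef →
        ∀ i, ((1 : Matrix (Fin d₂) (Fin d₂) ℂ) ⊗ₖ Qb) * Xfam i
          * ((1 : Matrix (Fin d₂) (Fin d₂) ℂ) ⊗ₖ Qb) = Xfam i := by
    intro ρb Qb hρbQb hQbH Xfam σX t ht hXpsd hσX hXsum hdiff i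
    have hQbbigH : ((1 : Matrix (Fin d₂) (Fin d₂) ℂ) ⊗ₖ Qb)ᴴ
        = (1 : Matrix (Fin d₂) (Fin d₂) ℂ) ⊗ₖ Qb := by
      rw [Stmt7Aux.kron_conjT, Matrix.conjTranspose_one, hQbH]
    apply Stmt7Aux.absorb (hXpsd i).1 hQbbigH
    apply Stmt7Aux.mul_eq_zero_of_cols (B := (1 : Matrix (Fin d₂) (Fin d₂) ℂ) ⊗ₖ ρb)
    · intro v hv
      have hd1 : (((1 : Matrix (Fin d₂) (Fin d₂) ℂ) ⊗ₖ ρb)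
          - t • ((1 : Matrix (Fin d₂) (Fin d₂) ℂ) ⊗ₖ σX)).PosSemidef := by
        rw [← Stmt7Aux.one_kron_smul, ← Stmt7Aux.one_kron_sub]
        exact Stmt7Aux.one_kron_psd hdiff
      have h1 : (t • ((1 : Matrix (Fin d₂) (Fin d₂) ℂ) ⊗ₖ σX)) *ᵥ v = 0 :=
        Stmt7Aux.kernel_le (Stmt7Aux.psd_smul ht.le (Stmt7Aux.one_kron_psd hσX)) hd1 hv
      rw [Stmt7Aux.real_smul_eq, Matrix.smul_mulVec] at h1
      have h2 : ((1 : Matrix (Fin d₂) (Fin d₂) ℂ) ⊗ₖ σX) *ᵥ v = 0 := by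
        rcases smul_eq_zero.mp h1 with h | h
        · exact absurd h (by exact_mod_cast ht.ne')
        · exact h
      have hd2 : (((1 : Matrix (Fin d₂) (Fin d₂) ℂ) ⊗ₖ σX) - Xfam i).PosSemidef := by
        have he : ((1 : Matrix (Fin d₂) (Fin d₂) ℂ) ⊗ₖ σX) - Xfam i
            = ∑ j ∈ Finset.univ.erase i, Xfam j := by
          rw [← hXsum, ← Finset.add_sum_erase Finset.univ Xfam (Finset.mem_univ i),
            add_sub_cancel_left]
        rw [he]
        exact Stmt7Aux.psd_sum _ _ fun j _ => hXpsd j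
      exact Stmt7Aux.kernel_le (hXpsd i) hd2 h2
    · rw [Matrix.mul_sub, Matrix.mul_one, Stmt7Aux.one_kron_mul, hρbQb, sub_self]
  have habsA := habsfam ρ' Q' hρ'Q' hQ'H A σA a ha hApsd hσA hAsum hdiffA
  have habsB := habsfam ρ' Q' hρ'Q' hQ'H B σB bb hbb hBpsd hσB hBsum hdiffB
  have habsT := habsfam ρ Q hρQ hQH T ρ 1 one_pos hTpsd hρ hTsum
    (by rw [one_smul, sub_self]; exact Matrix.PosSemidef.zero)
  -- normalisation constants
  have pack : ∀ (σX : Matrix (Fin d₁) (Fin d₁) ℂ), σX.PosSemidef → σX.trace = 1 →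
      Q' * σX * Q' = σX → ∃ t : ℝ, 0 < t ∧ (S' * σX * S'ᴴ).trace = (t : ℂ) := by
    intro σX hσX hσXtr habs
    have hpsd : (S' * σX * S'ᴴ).PosSemidef := hσX.mul_mul_conjTranspose_same S'
    have hnn : 0 ≤ (S' * σX * S'ᴴ).trace := Stmt7Aux.psd_trace_nonneg hpsd
    have hne : (S' * σX * S'ᴴ).trace ≠ 0 := by
      intro h0
      have hzero : S' * σX * S'ᴴ = 0 := Stmt7Aux.psd_trace_zero hpsd h0
      have hσX0 : σX = 0 := by
        calc σX = Q' * σX * Q' := habs.symm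
          _ = Q' * σX * Q'ᴴ := by rw [hQ'H]
          _ = (S * S') * σX * (S * S')ᴴ := by rw [hQ'SS']
          _ = S * (S' * σX * S'ᴴ) * Sᴴ := (Stmt7Aux.conj_comp S S' σX).symm
          _ = 0 := by rw [hzero, Matrix.mul_zero, Matrix.zero_mul]
      rw [hσX0, Matrix.trace_zero] at hσXtr
      exact zero_ne_one hσXtr
    refine ⟨(S' * σX * S'ᴴ).trace.re, ?_, ?_⟩
    · have h1 : 0 ≤ (S' * σX * S'ᴴ).trace.re := (Complex.nonneg_iff.mp hnn).1
      have h2 : (S' * σX * S'ᴴ).trace.re ≠ 0 := by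
        intro h0
        apply hne
        apply Complex.ext
        · simpa using h0
        · simpa using (Complex.nonneg_iff.mp hnn).2.symm
      exact lt_of_le_of_ne h1 (Ne.symm h2)
    · apply Complex.ext
      · simp
      · simpa using (Complex.nonneg_iff.mp hnn).2.symm
  obtain ⟨tA, htApos, htAeq⟩ := pack σA hσA hσAtr habsσA
  obtain ⟨tB, htBpos, htBeq⟩ := pack σB hσB hσBtr habsσB
  -- membership of the renormalised pulled-back testers
  have hhatmem : ∀ (Xfam : Fin M → Matrix (Fin d₂ × Fin d₁) (Fin d₂ × Fin d₁) ℂ)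
      (σX : Matrix (Fin d₁) (Fin d₁) ℂ) (t : ℝ) (htpos : 0 < t),
      (∀ i, (Xfam i).PosSemidef) → σX.PosSemidef →
      (∑ i, Xfam i = (1 : Matrix (Fin d₂) (Fin d₂) ℂ) ⊗ₖ σX) →
      ((S' * σX * S'ᴴ).trace = (t : ℂ)) →
      (fun i => t⁻¹ • (((1 : Matrix (Fin d₂) (Fin d₂) ℂ) ⊗ₖ S') * Xfam i
          * (((1 : Matrix (Fin d₂) (Fin d₂) ℂ) ⊗ₖ S'))ᴴ)) ∈ {W | IsTester d₂ d₁ M W} := by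
    intro Xfam σX t htpos hXpsd hσX hXsum hteq
    refine ⟨fun i => Stmt7Aux.psd_smul (inv_nonneg.mpr htpos.le)
        ((hXpsd i).mul_mul_conjTranspose_same _),
      t⁻¹ • (S' * σX * S'ᴴ),
      Stmt7Aux.psd_smul (inv_nonneg.mpr htpos.le) (hσX.mul_mul_conjTranspose_same S'), ?_, ?_⟩
    · rw [Matrix.trace_smul, hteq, Complex.real_smul, ← Complex.ofReal_mul,
        inv_mul_cancel₀ htpos.ne', Complex.ofReal_one]
    · calc ∑ i, t⁻¹ • (((1 : Matrix (Fin d₂) (Fin d₂) ℂ) ⊗ₖ S') * Xfam i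
            * (((1 : Matrix (Fin d₂) (Fin d₂) ℂ) ⊗ₖ S'))ᴴ)
          = t⁻¹ • (((1 : Matrix (Fin d₂) (Fin d₂) ℂ) ⊗ₖ S') * (∑ i, Xfam i)
            * (((1 : Matrix (Fin d₂) (Fin d₂) ℂ) ⊗ₖ S'))ᴴ) := by
            rw [← Finset.smul_sum, ← Finset.sum_mul, ← Finset.mul_sum]
        _ = t⁻¹ • ((1 : Matrix (Fin d₂) (Fin d₂) ℂ) ⊗ₖ (S' * σX * S'ᴴ)) := by
            rw [hXsum, Stmt7Aux.one_kron_conj]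
        _ = (1 : Matrix (Fin d₂) (Fin d₂) ℂ) ⊗ₖ (t⁻¹ • (S' * σX * S'ᴴ)) :=
            (Stmt7Aux.one_kron_smul _ _).symm
  have hAhatmem := hhatmem A σA tA htApos hApsd hσA hAsum htAeq
  have hBhatmem := hhatmem B σB tB htBpos hBpsd hσB hBsum htBeq
  -- T lies on the open segment between the pulled-back testers
  have hQbigH : ((1 : Matrix (Fin d₂) (Fin d₂) ℂ) ⊗ₖ Q)ᴴ
      = (1 : Matrix (Fin d₂) (Fin d₂) ℂ) ⊗ₖ Q := by
    rw [Stmt7Aux.kron_conjT, Matrix.conjTranspose_one, hQH]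
  have hTseg : T ∈ openSegment ℝ
      (fun i => tA⁻¹ • (((1 : Matrix (Fin d₂) (Fin d₂) ℂ) ⊗ₖ S') * A i
        * (((1 : Matrix (Fin d₂) (Fin d₂) ℂ) ⊗ₖ S'))ᴴ))
      (fun i => tB⁻¹ • (((1 : Matrix (Fin d₂) (Fin d₂) ℂ) ⊗ₖ S') * B i
        * (((1 : Matrix (Fin d₂) (Fin d₂) ℂ) ⊗ₖ S'))ᴴ)) := by
    refine ⟨a * tA, bb * tB, mul_pos ha htApos, mul_pos hbb htBpos, ?_, ?_⟩
    · have e1 : a • (S' * σA * S'ᴴ) + bb • (S' * σB * S'ᴴ) = S' * ρ' * S'ᴴ := by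
        rw [← hsplit]
        simp only [Matrix.mul_add, Matrix.add_mul, Matrix.mul_smul, Matrix.smul_mul]
      have e2 := congrArg Matrix.trace e1
      rw [Matrix.trace_add, Matrix.trace_smul, Matrix.trace_smul, htAeq, htBeq, hF2, hρtr] at e2
      rw [Complex.real_smul, Complex.real_smul] at e2
      have e3 : ((a * tA + bb * tB : ℝ) : ℂ) = ((1 : ℝ) : ℂ) := by
        push_cast
        simpa using e2
      exact_mod_cast e3
    · funext i
      simp only [Pi.add_apply, Pi.smul_apply]
      have hsm : ∀ (x y : ℝ) (X : Matrix (Fin d₂ × Fin d₁) (Fin d₂ × Fin d₁) ℂ), y ≠ 0 →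
          (x * y) • (y⁻¹ • X) = x • X := by
        intro x y X hy
        rw [smul_smul, mul_assoc, mul_inv_cancel₀ hy, mul_one]
      rw [hsm a tA _ htApos.ne', hsm bb tB _ htBpos.ne']
      have e4 : a • (((1 : Matrix (Fin d₂) (Fin d₂) ℂ) ⊗ₖ S') * A i
            * (((1 : Matrix (Fin d₂) (Fin d₂) ℂ) ⊗ₖ S'))ᴴ)
          + bb • (((1 : Matrix (Fin d₂) (Fin d₂) ℂ) ⊗ₖ S') * B i
            * (((1 : Matrix (Fin d₂) (Fin d₂) ℂ) ⊗ₖ S'))ᴴ)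
          = ((1 : Matrix (Fin d₂) (Fin d₂) ℂ) ⊗ₖ S') * T' i
            * (((1 : Matrix (Fin d₂) (Fin d₂) ℂ) ⊗ₖ S'))ᴴ := by
        rw [← hcomb' i]
        simp only [Matrix.mul_add, Matrix.add_mul, Matrix.mul_smul, Matrix.smul_mul]
      rw [e4, hT'def]
      rw [Stmt7Aux.conj_comp, Stmt7Aux.one_kron_mul, hQSS, hQbigH]
      exact habsT i
  obtain ⟨hAT, hBT⟩ := hText.2 _ hAhatmem _ hBhatmem hTseg
  -- recovering the original operators
  have post : ∀ (Xfam : Fin M → Matrix (Fin d₂ × Fin d₁) (Fin d₂ × Fin d₁) ℂ)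
      (σX : Matrix (Fin d₁) (Fin d₁) ℂ) (t : ℝ), 0 < t →
      (∀ i, ((1 : Matrix (Fin d₂) (Fin d₂) ℂ) ⊗ₖ Q') * Xfam i
        * ((1 : Matrix (Fin d₂) (Fin d₂) ℂ) ⊗ₖ Q') = Xfam i) →
      (∑ i, Xfam i = (1 : Matrix (Fin d₂) (Fin d₂) ℂ) ⊗ₖ σX) → σX.trace = 1 →
      ((fun i => t⁻¹ • (((1 : Matrix (Fin d₂) (Fin d₂) ℂ) ⊗ₖ S') * Xfam i
        * (((1 : Matrix (Fin d₂) (Fin d₂) ℂ) ⊗ₖ S'))ᴴ)) = T) → Xfam = T' := by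
    intro Xfam σX t htpos habs hXsum hXtr hXT
    have hQ'bigH : ((1 : Matrix (Fin d₂) (Fin d₂) ℂ) ⊗ₖ Q')ᴴ
        = (1 : Matrix (Fin d₂) (Fin d₂) ℂ) ⊗ₖ Q' := by
      rw [Stmt7Aux.kron_conjT, Matrix.conjTranspose_one, hQ'H]
    have hXi : ∀ i, Xfam i = t • T' i := by
      intro i
      have h1 : ((1 : Matrix (Fin d₂) (Fin d₂) ℂ) ⊗ₖ S') * Xfam i
          * (((1 : Matrix (Fin d₂) (Fin d₂) ℂ) ⊗ₖ S'))ᴴ = t • T i := by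
        have h0 := congrFun hXT i
        rw [← h0, smul_smul, mul_inv_cancel₀ htpos.ne', one_smul]
      calc Xfam i
          = ((1 : Matrix (Fin d₂) (Fin d₂) ℂ) ⊗ₖ Q') * Xfam i
            * ((1 : Matrix (Fin d₂) (Fin d₂) ℂ) ⊗ₖ Q') := (habs i).symm
        _ = ((1 : Matrix (Fin d₂) (Fin d₂) ℂ) ⊗ₖ Q') * Xfam i
            * ((1 : Matrix (Fin d₂) (Fin d₂) ℂ) ⊗ₖ Q')ᴴ := by rw [hQ'bigH]
        _ = (((1 : Matrix (Fin d₂) (Fin d₂) ℂ) ⊗ₖ S)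
              * ((1 : Matrix (Fin d₂) (Fin d₂) ℂ) ⊗ₖ S')) * Xfam i
            * ((((1 : Matrix (Fin d₂) (Fin d₂) ℂ) ⊗ₖ S)
              * ((1 : Matrix (Fin d₂) (Fin d₂) ℂ) ⊗ₖ S')))ᴴ := by
            rw [Stmt7Aux.one_kron_mul, hQ'SS']
        _ = ((1 : Matrix (Fin d₂) (Fin d₂) ℂ) ⊗ₖ S)
            * (((1 : Matrix (Fin d₂) (Fin d₂) ℂ) ⊗ₖ S') * Xfam i
              * (((1 : Matrix (Fin d₂) (Fin d₂) ℂ) ⊗ₖ S'))ᴴ)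
            * (((1 : Matrix (Fin d₂) (Fin d₂) ℂ) ⊗ₖ S))ᴴ :=
            (Stmt7Aux.conj_comp _ _ _).symm
        _ = ((1 : Matrix (Fin d₂) (Fin d₂) ℂ) ⊗ₖ S) * (t • T i)
            * (((1 : Matrix (Fin d₂) (Fin d₂) ℂ) ⊗ₖ S))ᴴ := by rw [h1]
        _ = t • T' i := by rw [Matrix.mul_smul, Matrix.smul_mul, hT'def]
    have hsumX : (1 : Matrix (Fin d₂) (Fin d₂) ℂ) ⊗ₖ σX
        = (1 : Matrix (Fin d₂) (Fin d₂) ℂ) ⊗ₖ (t • ρ') := by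
      calc (1 : Matrix (Fin d₂) (Fin d₂) ℂ) ⊗ₖ σX = ∑ i, Xfam i := hXsum.symm
        _ = ∑ i, t • T' i := Finset.sum_congr rfl fun i _ => hXi i
        _ = t • ∑ i, T' i := (Finset.smul_sum).symm
        _ = t • ((1 : Matrix (Fin d₂) (Fin d₂) ℂ) ⊗ₖ ρ') := by rw [hT'sum]
        _ = (1 : Matrix (Fin d₂) (Fin d₂) ℂ) ⊗ₖ (t • ρ') := (Stmt7Aux.one_kron_smul _ _).symm
    have hσXeq : σX = t • ρ' := Stmt7Aux.kron_inj j₂ hsumX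
    have ht1 : t = 1 := by
      have h5 := congrArg Matrix.trace hσXeq
      rw [hXtr, Matrix.trace_smul, hρ'tr] at h5
      have h6 : (1 : ℂ) = (t : ℂ) := by
        rw [h5, Complex.real_smul, mul_one]
      exact_mod_cast h6.symm
    funext i
    rw [hXi i, ht1, one_smul]
  exact ⟨post A σA tA htApos habsA hAsum hσAtr hAT, post B σB tB htBpos habsB hBsum hσBtr hBT⟩
end

section
/- If {T_i}_{i=1}^M is an extremal quantum 1-tester on ℋ₂⊗ℋ₁ with normalization ∑_{i=1}^M T_i = (1/d₁) I₂⊗I₁, then the family {E_i = d₁ T_i}_{i=1}^M is an extremal POVM on ℋ₂⊗ℋ₁. -/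
open Matrix Kronecker
open scoped ComplexOrder

/-- A POVM with `M` outcomes on a finite-dimensional Hilbert space. -/
def IsPOVM {n : Type*} [Fintype n] [DecidableEq n] (M : ℕ)
    (E : Fin M → Matrix n n ℂ) : Prop :=
  (∀ i, (E i).PosSemidef) ∧ ∑ i, E i = 1


lemma psd_smul_aux {n : Type*} [Fintype n] (c : ℂ) (hc : 0 ≤ c)
    {A : Matrix n n ℂ} (hA : A.PosSemidef) : (c • A).PosSemidef := by
  rw [Complex.le_def] at hc
  simp only [Complex.zero_re, Complex.zero_im] at hc
  refine ⟨?_, fun x => ?_⟩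
  · unfold Matrix.IsHermitian
    rw [Matrix.conjTranspose_smul, hA.1.eq]
    congr 1
    simp [Complex.ext_iff, ← hc.2]
  · have hc' : (0:ℂ) ≤ c := Complex.le_def.mpr ⟨by simpa using hc.1, by simpa using hc.2⟩
    exact (hA.smul hc').2 x

theorem stmt_8 {d₁ d₂ M : ℕ} (T : Fin M → Matrix (Fin d₂ × Fin d₁) (Fin d₂ × Fin d₁) ℂ)
    (hT : IsTester d₂ d₁ M T)
    (hnorm : ∑ i, T i =
      (d₁ : ℂ)⁻¹ • ((1 : Matrix (Fin d₂) (Fin d₂) ℂ) ⊗ₖ (1 : Matrix (Fin d₁) (Fin d₁) ℂ)))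
    (hext : T ∈ {W | IsTester d₂ d₁ M W}.extremePoints ℝ) :
    (fun i => (d₁ : ℂ) • T i) ∈
      {E : Fin M → Matrix (Fin d₂ × Fin d₁) (Fin d₂ × Fin d₁) ℂ |
        IsPOVM M E}.extremePoints ℝ := by
  obtain ⟨hTpos, ρ, hρpos, hρtr, hρsum⟩ := hT
  have hd1 : d₁ ≠ 0 := by
    rintro rfl
    rw [Matrix.trace] at hρtr
    simp at hρtr
  have hdc : (d₁ : ℂ) ≠ 0 := Nat.cast_ne_zero.mpr hd1
  have hdR : (0:ℝ) < (d₁ : ℝ) := by positivity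
  have hdnn : (0:ℂ) ≤ (d₁ : ℂ) := by
    rw [← Complex.ofReal_natCast, Complex.zero_le_real]
    positivity
  have hdinn : (0:ℂ) ≤ (d₁ : ℂ)⁻¹ := by
    rw [← Complex.ofReal_natCast, ← Complex.ofReal_inv, Complex.zero_le_real]
    positivity
  have key : ∑ i, (d₁ : ℂ) • T i = 1 := by
    rw [← Finset.smul_sum, hnorm, smul_smul, mul_inv_cancel₀ hdc, one_smul,
      Matrix.one_kronecker_one]
  rw [mem_extremePoints] at hext ⊢
  obtain ⟨hTmem, hTex⟩ := hext
  refine ⟨⟨fun i => psd_smul_aux (d₁:ℂ) hdnn (hTpos i), key⟩, ?_⟩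
  rintro F ⟨hFpos, hFsum⟩ G ⟨hGpos, hGsum⟩ ⟨a, b, ha, hb, hab, habT⟩
  set F' : Fin M → Matrix (Fin d₂ × Fin d₁) (Fin d₂ × Fin d₁) ℂ :=
    fun i => (d₁ : ℂ)⁻¹ • F i with hF'
  set G' : Fin M → Matrix (Fin d₂ × Fin d₁) (Fin d₂ × Fin d₁) ℂ :=
    fun i => (d₁ : ℂ)⁻¹ • G i with hG'
  have tester_of : ∀ (H : Fin M → Matrix (Fin d₂ × Fin d₁) (Fin d₂ × Fin d₁) ℂ),
      (∀ i, (H i).PosSemidef) → ∑ i, H i = 1 →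
      IsTester d₂ d₁ M (fun i => (d₁ : ℂ)⁻¹ • H i) := by
    intro H hpos hsum
    refine ⟨fun i => psd_smul_aux ((d₁:ℂ))⁻¹ hdinn (hpos i),
      (d₁ : ℂ)⁻¹ • 1, psd_smul_aux ((d₁:ℂ))⁻¹ hdinn Matrix.PosSemidef.one, ?_, ?_⟩
    · simp [Matrix.trace_smul, Matrix.trace_one, inv_mul_cancel₀ hdc]
    · rw [← Finset.smul_sum, hsum, Matrix.kronecker_smul, Matrix.one_kronecker_one]
  have hF'T : IsTester d₂ d₁ M F' := tester_of F hFpos hFsum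
  have hG'T : IsTester d₂ d₁ M G' := tester_of G hGpos hGsum
  have hseg : a • F' + b • G' = T := by
    have : (d₁:ℂ)⁻¹ • (a • F + b • G) = (d₁:ℂ)⁻¹ • (fun i => (d₁ : ℂ) • T i) := by
      rw [habT]
    funext i
    have h2 := congrFun this i
    simp only [Pi.smul_apply, Pi.add_apply, smul_smul, inv_mul_cancel₀ hdc, one_smul,
      smul_add] at h2
    simp only [Pi.add_apply, Pi.smul_apply, hF', hG']
    rw [← h2]
    rw [smul_comm a ((d₁:ℂ)⁻¹), smul_comm b ((d₁:ℂ)⁻¹)]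
  obtain ⟨hFeq, hGeq⟩ := hTex F' hF'T G' hG'T ⟨a, b, ha, hb, hab, hseg⟩
  constructor
  · funext i
    have := congrFun hFeq i
    simp only [hF', Pi.smul_apply] at this ⊢
    rw [← this, smul_smul, mul_inv_cancel₀ hdc, one_smul]
  · funext i
    have := congrFun hGeq i
    simp only [hG', Pi.smul_apply] at this ⊢
    rw [← this, smul_smul, mul_inv_cancel₀ hdc, one_smul]
end

section
/- Let {E_i}_{i=1}^M be a POVM on ℋ₂ and let |φ⟩ be a unit vector in ℋ₁. The quantum 1-tester {T_i = E_i ⊗ |φ⟩⟨φ|}_{i=1}^M on ℋ₂⊗ℋ₁ is extremal if and only if the POVM {E_i}_{i=1}^M is extremal. -/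
open Matrix Kronecker
open scoped ComplexOrder

namespace Stmt9Aux

lemma conjT_kron {m n : Type*} (A : Matrix m m ℂ) (B : Matrix n n ℂ) :
    (A ⊗ₖ B)ᴴ = Aᴴ ⊗ₖ Bᴴ := by
  ext ⟨i, j⟩ ⟨k, l⟩
  simp [conjTranspose_apply, kroneckerMap_apply, star_mul']

lemma psd_kron {m n : Type*} [Fintype m] [Fintype n] [DecidableEq m] [DecidableEq n]
    {A : Matrix m m ℂ} {B : Matrix n n ℂ} (hA : A.PosSemidef) (hB : B.PosSemidef) :
    (A ⊗ₖ B).PosSemidef := by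
  exact hA.kronecker hB

lemma sum_kron {ι m n : Type*} [Fintype ι] [Fintype m] (f : ι → Matrix m m ℂ)
    (B : Matrix n n ℂ) : (∑ i, f i) ⊗ₖ B = ∑ i, f i ⊗ₖ B := by
  ext ⟨k, j⟩ ⟨l, j'⟩
  simp [kroneckerMap_apply, Matrix.sum_apply, Finset.sum_mul]

end Stmt9Aux

open Stmt9Aux

theorem stmt_9 {d₁ d₂ M : ℕ} (E : Fin M → Matrix (Fin d₂) (Fin d₂) ℂ)
    (hE : IsPOVM M E)
    (φ : Fin d₁ → ℂ) (hφ : ∑ j, star (φ j) * φ j = 1) :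
    (fun i => E i ⊗ₖ Matrix.vecMulVec φ (star φ)) ∈
        {W | IsTester d₂ d₁ M W}.extremePoints ℝ ↔
      E ∈ {F : Fin M → Matrix (Fin d₂) (Fin d₂) ℂ | IsPOVM M F}.extremePoints ℝ := by
  set P : Matrix (Fin d₁) (Fin d₁) ℂ := Matrix.vecMulVec φ (star φ) with hPdef
  -- Basic facts about `P`.
  have hPapp : ∀ j j', P j j' = φ j * star (φ j') := fun j j' => rfl
  have hPherm : Pᴴ = P := by
    ext j j'
    simp [hPdef, conjTranspose_apply, vecMulVec_apply, star_mul', mul_comm]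
  have hPtr : P.trace = 1 := by
    rw [Matrix.trace]
    simp only [diag_apply, hPdef, vecMulVec_apply, Pi.star_apply]
    rw [Finset.sum_congr rfl fun j _ => mul_comm (φ j) (star (φ j)), hφ]
  have hPP : P * P = P := by
    ext j j'
    simp only [Matrix.mul_apply, hPdef, vecMulVec_apply, Pi.star_apply]
    rw [Finset.sum_congr rfl
      (fun m _ => show φ j * star (φ m) * (φ m * star (φ j')) =
        φ j * star (φ j') * (star (φ m) * φ m) by ring),
      ← Finset.mul_sum, hφ, mul_one]
  have hPpsd : P.PosSemidef := by
    refine .of_dotProduct_mulVec_nonneg hPherm fun x => ?_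
    have key : star x ⬝ᵥ P *ᵥ x =
        (∑ i, star (x i) * φ i) * (∑ j, star (φ j) * x j) := by
      rw [Finset.sum_mul_sum]
      simp only [dotProduct, mulVec, Pi.star_apply, hPdef, vecMulVec_apply, Finset.mul_sum]
      exact Finset.sum_congr rfl fun i _ => Finset.sum_congr rfl fun j _ => by ring
    have hst : (∑ i, star (x i) * φ i) = star (∑ j, star (φ j) * x j) := by
      rw [star_sum]
      exact Finset.sum_congr rfl fun j _ => by simp [mul_comm]
    rw [key, hst]
    exact star_mul_self_nonneg _
  -- a coordinate where φ is nonzero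
  obtain ⟨j₀, hj₀⟩ : ∃ j₀, φ j₀ ≠ 0 := by
    by_contra h
    push_neg at h
    simp only [h, mul_zero, Finset.sum_const_zero] at hφ
    exact one_ne_zero hφ.symm
  have hc : P j₀ j₀ ≠ 0 := by
    rw [hPapp]
    exact mul_ne_zero hj₀ (star_ne_zero.mpr hj₀)
  -- cancellation of `⊗ₖ P`
  have cancel : ∀ A B : Matrix (Fin d₂) (Fin d₂) ℂ, A ⊗ₖ P = B ⊗ₖ P → A = B := by
    intro A B h
    ext k l
    have h2 := congrFun (congrFun h (k, j₀)) (l, j₀)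
    simp only [kroneckerMap_apply] at h2
    exact mul_right_cancel₀ hc h2
  -- POVMs give testers
  have memT : ∀ F : Fin M → Matrix (Fin d₂) (Fin d₂) ℂ, IsPOVM M F →
      IsTester d₂ d₁ M (fun i => F i ⊗ₖ P) := by
    intro F hF
    refine ⟨fun i => psd_kron (hF.1 i) hPpsd, P, hPpsd, hPtr, ?_⟩
    rw [← sum_kron, hF.2]
  constructor
  · -- tester extremal → POVM extremal
    intro hT
    obtain ⟨hTmem, hText⟩ := mem_extremePoints.mp hT
    refine mem_extremePoints.mpr ⟨hE, ?_⟩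
    intro F hF G hG hseg
    obtain ⟨a, b, ha, hb, hab, hsum⟩ := hseg
    have hseg' : (fun i => E i ⊗ₖ P) ∈
        openSegment ℝ (fun i => F i ⊗ₖ P) (fun i => G i ⊗ₖ P) := by
      refine ⟨a, b, ha, hb, hab, ?_⟩
      funext i
      have hi := congrFun hsum i
      simp only [Pi.add_apply, Pi.smul_apply] at hi ⊢
      rw [← smul_kronecker, ← smul_kronecker, ← add_kronecker, hi]
    obtain ⟨h1, h2⟩ := hText _ (memT F hF) _ (memT G hG) hseg'
    constructor
    · funext i; exact cancel _ _ (congrFun h1 i)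
    · funext i; exact cancel _ _ (congrFun h2 i)
  · -- POVM extremal → tester extremal
    intro hE'
    obtain ⟨hEmem, hEext⟩ := mem_extremePoints.mp hE'
    refine mem_extremePoints.mpr ⟨memT E hE, ?_⟩
    intro W₁ hW₁ W₂ hW₂ hseg
    obtain ⟨a, b, ha, hb, hab, hsum⟩ := hseg
    obtain ⟨hW₁psd, ρ₁, hρ₁psd, hρ₁tr, hρ₁sum⟩ := hW₁
    obtain ⟨hW₂psd, ρ₂, hρ₂psd, hρ₂tr, hρ₂sum⟩ := hW₂
    set Q : Matrix (Fin d₂ × Fin d₁) (Fin d₂ × Fin d₁) ℂ :=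
      (1 : Matrix (Fin d₂) (Fin d₂) ℂ) ⊗ₖ P with hQdef
    have hQQ : Q * Q = Q := by rw [hQdef, ← mul_kronecker_mul, one_mul, hPP]
    have hQH : Qᴴ = Q := by rw [hQdef, conjT_kron, conjTranspose_one, hPherm]
    set A : Matrix (Fin d₂ × Fin d₁) (Fin d₂) ℂ :=
      Matrix.of (fun p l => if p.1 = l then φ p.2 else 0) with hAdef
    have hQA : Q = A * Aᴴ := by
      ext ⟨k, m⟩ ⟨l, m'⟩
      simp only [hQdef, kroneckerMap_apply, Matrix.mul_apply, conjTranspose_apply, hAdef,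
        Matrix.of_apply, one_apply, apply_ite (star : ℂ → ℂ), star_zero, ite_mul, mul_ite,
        zero_mul, mul_zero]
      rw [Finset.sum_eq_single k]
      · by_cases hkl : k = l
        · subst hkl; simp [hPapp]
        · rw [if_neg hkl, if_neg (fun h : l = k => hkl h.symm)]
      · intro r _ hr; simp [Ne.symm hr]
      · intro h; exact absurd (Finset.mem_univ k) h
    have hAFA : ∀ F : Matrix (Fin d₂) (Fin d₂) ℂ, A * F * Aᴴ = F ⊗ₖ P := by
      intro F
      ext ⟨k, m⟩ ⟨l, m'⟩
      simp only [Matrix.mul_apply, conjTranspose_apply, hAdef, Matrix.of_apply,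
        kroneckerMap_apply, apply_ite (star : ℂ → ℂ), star_zero, ite_mul, mul_ite,
        zero_mul, mul_zero, hPapp]
      simp only [Finset.sum_ite_eq, Finset.mem_univ, if_true]
      ring
    -- kernel property
    have hker : ∀ i v, Q *ᵥ v = 0 → W₁ i *ᵥ v = 0 ∧ W₂ i *ᵥ v = 0 := by
      intro i v hv
      have hEiP : (E i ⊗ₖ P) *ᵥ v = 0 := by
        have hE2 : E i ⊗ₖ P = (E i ⊗ₖ P) * Q := by
          rw [hQdef, ← mul_kronecker_mul, mul_one, hPP]
        rw [hE2, ← mulVec_mulVec, hv, mulVec_zero]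
      have hi := congrFun hsum i
      simp only [Pi.add_apply, Pi.smul_apply] at hi
      have hq : (a : ℂ) * (star v ⬝ᵥ W₁ i *ᵥ v) + (b : ℂ) * (star v ⬝ᵥ W₂ i *ᵥ v) = 0 := by
        have h3 := congrArg (fun X => star v ⬝ᵥ X *ᵥ v) hi
        simp only [add_mulVec, dotProduct_add, smul_mulVec, dotProduct_smul,
          Complex.real_smul] at h3
        rw [h3, hEiP, dotProduct_zero]
      have hq₁ : (0 : ℂ) ≤ (a : ℂ) * (star v ⬝ᵥ W₁ i *ᵥ v) :=
        mul_nonneg (by exact_mod_cast ha.le) ((hW₁psd i).dotProduct_mulVec_nonneg v)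
      have hq₂ : (0 : ℂ) ≤ (b : ℂ) * (star v ⬝ᵥ W₂ i *ᵥ v) :=
        mul_nonneg (by exact_mod_cast hb.le) ((hW₂psd i).dotProduct_mulVec_nonneg v)
      obtain ⟨e₁, e₂⟩ := (add_eq_zero_iff_of_nonneg hq₁ hq₂).mp hq
      have z₁ : star v ⬝ᵥ W₁ i *ᵥ v = 0 := by
        rcases mul_eq_zero.mp e₁ with h | h
        · exact absurd h (by exact_mod_cast ha.ne')
        · exact h
      have z₂ : star v ⬝ᵥ W₂ i *ᵥ v = 0 := by
        rcases mul_eq_zero.mp e₂ with h | h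
        · exact absurd h (by exact_mod_cast hb.ne')
        · exact h
      exact ⟨((hW₁psd i).dotProduct_mulVec_zero_iff v).mp z₁,
        ((hW₂psd i).dotProduct_mulVec_zero_iff v).mp z₂⟩
    -- sandwich and decomposition
    have decomp : ∀ W : Matrix (Fin d₂ × Fin d₁) (Fin d₂ × Fin d₁) ℂ, W.PosSemidef →
        (∀ v, Q *ᵥ v = 0 → W *ᵥ v = 0) → W = (Aᴴ * W * A) ⊗ₖ P := by
      intro W hW hk
      have h1 : W * Q = W := by
        have hv : ∀ v, (W * Q) *ᵥ v = W *ᵥ v := by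
          intro v
          have hz : W *ᵥ (v - Q *ᵥ v) = 0 := by
            apply hk
            rw [mulVec_sub, mulVec_mulVec, hQQ, sub_self]
          rw [mulVec_sub, mulVec_mulVec, sub_eq_zero] at hz
          exact hz.symm
        ext i j
        have h4 := congrFun (hv (Pi.single j 1)) i
        simpa using h4
      have h2 : W = Q * W := by
        calc W = Wᴴ := hW.1.symm
        _ = (W * Q)ᴴ := by rw [h1]
        _ = Qᴴ * Wᴴ := conjTranspose_mul _ _
        _ = Q * W := by rw [hQH, hW.1]
      have h3 : W = Q * W * Q := by rw [← h2, h1]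
      rw [← hAFA]
      calc W = Q * W * Q := h3
      _ = A * Aᴴ * W * (A * Aᴴ) := by rw [← hQA]
      _ = A * (Aᴴ * W * A) * Aᴴ := by simp only [Matrix.mul_assoc]
    have dW₁ : ∀ i, W₁ i = (Aᴴ * W₁ i * A) ⊗ₖ P :=
      fun i => decomp _ (hW₁psd i) (fun v hv => (hker i v hv).1)
    have dW₂ : ∀ i, W₂ i = (Aᴴ * W₂ i * A) ⊗ₖ P :=
      fun i => decomp _ (hW₂psd i) (fun v hv => (hker i v hv).2)
    set F₁ : Fin M → Matrix (Fin d₂) (Fin d₂) ℂ := fun i => Aᴴ * W₁ i * A with hF₁def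
    set F₂ : Fin M → Matrix (Fin d₂) (Fin d₂) ℂ := fun i => Aᴴ * W₂ i * A with hF₂def
    -- sums are the identity
    have sumOne : ∀ (F : Fin M → Matrix (Fin d₂) (Fin d₂) ℂ)
        (ρ : Matrix (Fin d₁) (Fin d₁) ℂ), ρ.trace = 1 →
        (∑ i, F i) ⊗ₖ P = (1 : Matrix (Fin d₂) (Fin d₂) ℂ) ⊗ₖ ρ → ∑ i, F i = 1 := by
      intro F ρ hρtr hFρ
      set S : Matrix (Fin d₂) (Fin d₂) ℂ := ∑ i, F i with hSdef
      have hent : ∀ k l j j', S k l * P j j' = (1 : Matrix (Fin d₂) (Fin d₂) ℂ) k l * ρ j j' :=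
        fun k l j j' => congrFun (congrFun hFρ (k, j)) (l, j')
      ext k l
      by_cases hkl : k = l
      · subst hkl
        have htr : S k k * P.trace = ρ.trace := by
          rw [Matrix.trace, Matrix.trace, Finset.mul_sum]
          exact Finset.sum_congr rfl fun j _ => by
            have := hent k k j j
            simpa [one_apply_eq] using this
        rw [hPtr, mul_one, hρtr] at htr
        simpa [one_apply_eq] using htr
      · have h0 := hent k l j₀ j₀
        rw [one_apply_ne hkl, zero_mul] at h0
        rw [one_apply_ne hkl]
        exact (mul_eq_zero.mp h0).resolve_right hc
    have hF₁sum : ∑ i, F₁ i = 1 := by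
      apply sumOne F₁ ρ₁ hρ₁tr
      rw [sum_kron]
      rw [← hρ₁sum]
      exact Finset.sum_congr rfl fun i _ => (dW₁ i).symm
    have hF₂sum : ∑ i, F₂ i = 1 := by
      apply sumOne F₂ ρ₂ hρ₂tr
      rw [sum_kron]
      rw [← hρ₂sum]
      exact Finset.sum_congr rfl fun i _ => (dW₂ i).symm
    have hF₁povm : IsPOVM M F₁ :=
      ⟨fun i => (hW₁psd i).conjTranspose_mul_mul_same A, hF₁sum⟩
    have hF₂povm : IsPOVM M F₂ :=
      ⟨fun i => (hW₂psd i).conjTranspose_mul_mul_same A, hF₂sum⟩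
    have hsegE : E ∈ openSegment ℝ F₁ F₂ := by
      refine ⟨a, b, ha, hb, hab, ?_⟩
      funext i
      apply cancel
      have hi := congrFun hsum i
      simp only [Pi.add_apply, Pi.smul_apply] at hi
      rw [dW₁ i, dW₂ i, ← smul_kronecker, ← smul_kronecker, ← add_kronecker] at hi
      simp only [Pi.add_apply, Pi.smul_apply]
      exact hi
    obtain ⟨g₁, g₂⟩ := hEext _ hF₁povm _ hF₂povm hsegE
    constructor
    · funext i
      rw [dW₁ i]
      rw [show Aᴴ * W₁ i * A = F₁ i from rfl, g₁]
    · funext i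
      rw [dW₂ i]
      rw [show Aᴴ * W₂ i * A = F₂ i from rfl, g₂]
end

section
/- Let ℋ₂ = ℋ₁ = ℂ² and let |φ₁⟩ be a unit vector in ℂ²⊗ℂ². The two-outcome quantum 1-tester {T₁ = ½|φ₁⟩⟨φ₁|, T₂ = ½(I⊗I − |φ₁⟩⟨φ₁|)} is extremal if and only if |φ₁⟩ is not a product vector, i.e. if and only if |φ₁⟩ cannot be written as |f⟩⊗|e⟩ with |f⟩ ∈ ℋ₂, |e⟩ ∈ ℋ₁. -/
open Matrix Kronecker
open scoped ComplexOrder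

namespace Stmt11Aux

variable {n m : Type*} [Fintype n] [DecidableEq n] [Fintype m] [DecidableEq m]

lemma vmv_mulVec (w v x : n → ℂ) : (vecMulVec w v) *ᵥ x = (v ⬝ᵥ x) • w := by
  funext i
  simp only [mulVec, dotProduct, vecMulVec_apply, Pi.smul_apply, smul_eq_mul, Finset.sum_mul]
  exact Finset.sum_congr rfl fun j _ => by ring

lemma star_dot_comm (x v : n → ℂ) : star x ⬝ᵥ v = star (star v ⬝ᵥ x) := by
  simp only [dotProduct, star_sum, star_mul', star_star, Pi.star_apply]
  exact Finset.sum_congr rfl fun j _ => by ring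

lemma psd_vmv (v : n → ℂ) : (vecMulVec v (star v)).PosSemidef := by
  refine Matrix.PosSemidef.of_dotProduct_mulVec_nonneg ?_ ?_
  · ext i j
    simp only [conjTranspose_apply, vecMulVec_apply, Pi.star_apply, star_mul', star_star]
    ring
  · intro x
    rw [vmv_mulVec, dotProduct_smul, smul_eq_mul, star_dot_comm]
    exact star_mul_self_nonneg _

lemma vmv_mul_vmv (w v u x : n → ℂ) :
    vecMulVec w v * vecMulVec u x = (v ⬝ᵥ u) • vecMulVec w x := by
  ext i j
  simp only [mul_apply, vecMulVec_apply, Matrix.smul_apply, smul_eq_mul, dotProduct,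
    Finset.sum_mul]
  exact Finset.sum_congr rfl fun k _ => by ring

lemma psd_smul {c : ℂ} (hc : 0 ≤ c) {M : Matrix n n ℂ} (hM : M.PosSemidef) :
    (c • M).PosSemidef := by
  have hcr : star c = c := by
    have him : c.im = 0 := by simpa using (Complex.le_def.mp hc).2.symm
    exact Complex.ext (by simp) (by simp [him])
  refine Matrix.PosSemidef.of_dotProduct_mulVec_nonneg ?_ ?_
  · show (c • M)ᴴ = c • M
    rw [conjTranspose_smul, hcr, hM.1]
  · intro x
    rw [smul_mulVec, dotProduct_smul, smul_eq_mul]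
    exact mul_nonneg hc (hM.dotProduct_mulVec_nonneg x)

lemma rsmul (r : ℝ) (M : Matrix n m ℂ) : r • M = ((r : ℂ)) • M := by
  ext i j
  simp [Complex.real_smul]

/-- A PSD matrix dominated by a multiple of a rank-one projector is itself a multiple. -/
lemma rankOne_dominated {c : ℂ} {v : n → ℂ} (hv : star v ⬝ᵥ v = 1) {M : Matrix n n ℂ}
    (hM : M.PosSemidef) (hle : (c • vecMulVec v (star v) - M).PosSemidef) :
    M = (star v ⬝ᵥ M *ᵥ v) • vecMulVec v (star v) := by
  have key : ∀ w : n → ℂ, star v ⬝ᵥ w = 0 → M *ᵥ w = 0 := by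
    intro w hw
    have h1 := hle.dotProduct_mulVec_nonneg w
    have h2 : (c • vecMulVec v (star v) - M) *ᵥ w = -(M *ᵥ w) := by
      rw [sub_mulVec, smul_mulVec, vmv_mulVec, hw, zero_smul, smul_zero, zero_sub]
    rw [h2, dotProduct_neg] at h1
    have h3 := hM.dotProduct_mulVec_nonneg w
    have h4 : star w ⬝ᵥ M *ᵥ w = 0 := le_antisymm (neg_nonneg.mp h1) h3
    exact (hM.dotProduct_mulVec_zero_iff w).mp h4
  have hw0 : star v ⬝ᵥ (M *ᵥ v - (star v ⬝ᵥ M *ᵥ v) • v) = 0 := by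
    rw [dotProduct_sub, dotProduct_smul, hv, smul_eq_mul, mul_one, sub_self]
  have hMw0 := key _ hw0
  have h7 : star (M *ᵥ v - (star v ⬝ᵥ M *ᵥ v) • v) ᵥ* M = 0 := by
    have h8 := congrArg star hMw0
    rw [star_mulVec, hM.1] at h8
    simpa using h8
  have h5 : star (M *ᵥ v - (star v ⬝ᵥ M *ᵥ v) • v) ⬝ᵥ (M *ᵥ v) = 0 := by
    rw [dotProduct_mulVec, h7, zero_dotProduct]
  have h6 : star (M *ᵥ v - (star v ⬝ᵥ M *ᵥ v) • v) ⬝ᵥ v = 0 := by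
    rw [star_dot_comm, hw0, star_zero]
  have hself : star (M *ᵥ v - (star v ⬝ᵥ M *ᵥ v) • v) ⬝ᵥ
      (M *ᵥ v - (star v ⬝ᵥ M *ᵥ v) • v) = 0 := by
    rw [dotProduct_sub, h5, dotProduct_smul, h6, smul_eq_mul, mul_zero, sub_zero]
  have huv : M *ᵥ v = (star v ⬝ᵥ M *ᵥ v) • v :=
    sub_eq_zero.mp (dotProduct_star_self_eq_zero.mp hself)
  have hx : ∀ x : n → ℂ,
      M *ᵥ x = ((star v ⬝ᵥ M *ᵥ v) • vecMulVec v (star v)) *ᵥ x := by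
    intro x
    have hw : star v ⬝ᵥ (x - (star v ⬝ᵥ x) • v) = 0 := by
      rw [dotProduct_sub, dotProduct_smul, hv, smul_eq_mul, mul_one, sub_self]
    have hdec : M *ᵥ x = M *ᵥ (x - (star v ⬝ᵥ x) • v) + (star v ⬝ᵥ x) • (M *ᵥ v) := by
      rw [mulVec_sub, mulVec_smul]
      abel
    rw [hdec, key _ hw, zero_add, huv, smul_mulVec, vmv_mulVec, smul_comm,
      dotProduct_smul, hv, smul_eq_mul, mul_one]
  ext i j
  have := congrFun (hx (Pi.single j 1)) i
  simpa only [mulVec, dotProduct, Pi.single_apply, mul_ite, mul_one, mul_zero,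
    Finset.sum_ite_eq', Finset.mem_univ, if_true] using this

lemma sub_kron (A B : Matrix n n ℂ) (C : Matrix m m ℂ) :
    (A - B) ⊗ₖ C = A ⊗ₖ C - B ⊗ₖ C := by
  ext ⟨i, j⟩ ⟨k, l⟩
  simp [kroneckerMap_apply, sub_mul]

lemma kron_sub (A : Matrix n n ℂ) (B C : Matrix m m ℂ) :
    A ⊗ₖ (B - C) = A ⊗ₖ B - A ⊗ₖ C := by
  ext ⟨i, j⟩ ⟨k, l⟩
  simp [kroneckerMap_apply, mul_sub]

lemma psd_kron {M : Matrix n n ℂ} {N : Matrix m m ℂ}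
    (hM : M.PosSemidef) (hN : N.PosSemidef) : (M ⊗ₖ N).PosSemidef := by
  exact hM.kronecker hN

lemma prod_iff_det (φ : Fin 2 × Fin 2 → ℂ) :
    (∃ f e : Fin 2 → ℂ, φ = fun p => f p.1 * e p.2) ↔
      φ (0,0) * φ (1,1) = φ (0,1) * φ (1,0) := by
  constructor
  · rintro ⟨f, e, rfl⟩
    ring
  · intro h
    by_cases h00 : φ (0,0) ≠ 0
    · refine ⟨![1, φ (1,0) / φ (0,0)], ![φ (0,0), φ (0,1)], ?_⟩
      funext p
      obtain ⟨i, j⟩ := p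
      fin_cases i <;> fin_cases j
      · exact (one_mul _).symm
      · exact (one_mul _).symm
      · show φ (1,0) = φ (1,0) / φ (0,0) * φ (0,0)
        rw [div_mul_cancel₀ _ h00]
      · show φ (1,1) = φ (1,0) / φ (0,0) * φ (0,1)
        rw [div_mul_eq_mul_div, eq_div_iff h00]
        linear_combination h
    · push_neg at h00
      by_cases h01 : φ (0,1) ≠ 0
      · have h10 : φ (1,0) = 0 := by
          have := h
          rw [h00, zero_mul] at this
          rcases mul_eq_zero.mp this.symm with hh | hh
          · exact absurd hh h01
          · exact hh
        refine ⟨![1, φ (1,1) / φ (0,1)], ![0, φ (0,1)], ?_⟩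
        funext p
        obtain ⟨i, j⟩ := p
        fin_cases i <;> fin_cases j
        · show φ (0,0) = 1 * 0
          rw [h00, one_mul]
        · exact (one_mul _).symm
        · show φ (1,0) = φ (1,1) / φ (0,1) * 0
          rw [h10, mul_zero]
        · show φ (1,1) = φ (1,1) / φ (0,1) * φ (0,1)
          rw [div_mul_cancel₀ _ h01]
      · push_neg at h01
        exact ⟨![0, 1], ![φ (1,0), φ (1,1)], by
          funext p
          obtain ⟨i, j⟩ := p
          fin_cases i <;> fin_cases j
          · show φ (0,0) = 0 * φ (1,0)
            rw [h00, zero_mul]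
          · show φ (0,1) = 0 * φ (1,1)
            rw [h01, zero_mul]
          · exact (one_mul _).symm
          · exact (one_mul _).symm⟩

lemma eigen_rho (φ : Fin 2 × Fin 2 → ℂ) (hdet : φ (0,0) * φ (1,1) ≠ φ (0,1) * φ (1,0))
    (ρ : Matrix (Fin 2) (Fin 2) ℂ) (a : ℂ)
    (h : ((1 : Matrix (Fin 2) (Fin 2) ℂ) ⊗ₖ ρ) *ᵥ φ = a • φ) :
    ρ = a • 1 := by
  have key : ∀ i j : Fin 2, ρ j 0 * φ (i, 0) + ρ j 1 * φ (i, 1) = a * φ (i, j) := by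
    intro i j
    have h0 := congrFun h (i, j)
    simp only [mulVec, dotProduct, Fintype.sum_prod_type, Fin.sum_univ_two,
      kroneckerMap_apply, Pi.smul_apply, smul_eq_mul] at h0
    fin_cases i <;>
      simpa [Matrix.one_apply, Fin.ext_iff] using h0
  have hd : φ (0,0) * φ (1,1) - φ (0,1) * φ (1,0) ≠ 0 := sub_ne_zero.mpr hdet
  have e1 := key 0 0
  have e2 := key 1 0
  have e3 := key 0 1
  have e4 := key 1 1
  have k00 : (ρ 0 0 - a) * (φ (0,0) * φ (1,1) - φ (0,1) * φ (1,0)) = 0 := by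
    linear_combination φ (1,1) * e1 - φ (0,1) * e2
  have k01 : ρ 0 1 * (φ (0,0) * φ (1,1) - φ (0,1) * φ (1,0)) = 0 := by
    linear_combination φ (0,0) * e2 - φ (1,0) * e1
  have k10 : ρ 1 0 * (φ (0,0) * φ (1,1) - φ (0,1) * φ (1,0)) = 0 := by
    linear_combination φ (1,1) * e3 - φ (0,1) * e4
  have k11 : (ρ 1 1 - a) * (φ (0,0) * φ (1,1) - φ (0,1) * φ (1,0)) = 0 := by
    linear_combination φ (0,0) * e4 - φ (1,0) * e3
  have r00 : ρ 0 0 = a := sub_eq_zero.mp ((mul_eq_zero.mp k00).resolve_right hd)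
  have r01 : ρ 0 1 = 0 := (mul_eq_zero.mp k01).resolve_right hd
  have r10 : ρ 1 0 = 0 := (mul_eq_zero.mp k10).resolve_right hd
  have r11 : ρ 1 1 = a := sub_eq_zero.mp ((mul_eq_zero.mp k11).resolve_right hd)
  ext i j
  fin_cases i <;> fin_cases j <;>
    simp [Matrix.one_apply, r00, r01, r10, r11]

end Stmt11Aux

theorem stmt_11 (φ : Fin 2 × Fin 2 → ℂ) (hφ : ∑ p, star (φ p) * φ p = 1) :
    ![(1/2 : ℂ) • Matrix.vecMulVec φ (star φ),
      (1/2 : ℂ) • ((1 : Matrix (Fin 2 × Fin 2) (Fin 2 × Fin 2) ℂ) -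
        Matrix.vecMulVec φ (star φ))] ∈
        {W | IsTester 2 2 2 W}.extremePoints ℝ ↔
      ¬ ∃ (f e : Fin 2 → ℂ), φ = fun p => f p.1 * e p.2 := by
  classical
  set P : Matrix (Fin 2 × Fin 2) (Fin 2 × Fin 2) ℂ := Matrix.vecMulVec φ (star φ) with hPdef
  have hφ' : star φ ⬝ᵥ φ = 1 := by
    simpa [dotProduct, Pi.star_apply] using hφ
  have hPφ : P *ᵥ φ = φ := by rw [hPdef, Stmt11Aux.vmv_mulVec, hφ', one_smul]
  have hPpsd : P.PosSemidef := Stmt11Aux.psd_vmv φ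
  have hP2 : P * P = P := by rw [hPdef, Stmt11Aux.vmv_mul_vmv, hφ', one_smul]
  have h1P : ((1 : Matrix (Fin 2 × Fin 2) (Fin 2 × Fin 2) ℂ) - P).PosSemidef := by
    have hH : ((1 : Matrix (Fin 2 × Fin 2) (Fin 2 × Fin 2) ℂ) - P)ᴴ = 1 - P := by
      rw [conjTranspose_sub, conjTranspose_one, hPpsd.1]
    have hsq : ((1 : Matrix (Fin 2 × Fin 2) (Fin 2 × Fin 2) ℂ) - P)ᴴ * (1 - P) = 1 - P := by
      rw [hH, mul_sub, mul_one, sub_mul, one_mul, hP2]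
      abel
    rw [← hsq]
    exact posSemidef_conjTranspose_mul_self _
  have htrP : P.trace = 1 := by
    rw [hPdef]
    calc Matrix.trace (vecMulVec φ (star φ)) = ∑ p, φ p * star (φ p) := by
          simp [Matrix.trace, Matrix.diag, vecMulVec_apply]
      _ = ∑ p, star (φ p) * φ p := Finset.sum_congr rfl fun p _ => mul_comm _ _
      _ = 1 := hφ
  have half_nonneg : (0:ℂ) ≤ 1/2 := by
    rw [show (1/2 : ℂ) = ((1/2 : ℝ) : ℂ) by norm_num]
    exact Complex.zero_le_real.mpr (by norm_num)
  have hone_kron : ∀ c : ℂ, (1 : Matrix (Fin 2) (Fin 2) ℂ) ⊗ₖ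
      (c • (1 : Matrix (Fin 2) (Fin 2) ℂ)) =
      c • (1 : Matrix (Fin 2 × Fin 2) (Fin 2 × Fin 2) ℂ) := by
    intro c
    rw [kronecker_smul, Matrix.one_kronecker_one]
  have hxS : ![(1/2 : ℂ) • P, (1/2 : ℂ) • (1 - P)] ∈ {W | IsTester 2 2 2 W} := by
    refine ⟨?_, (1/2 : ℂ) • 1,
      Stmt11Aux.psd_smul half_nonneg Matrix.PosSemidef.one, ?_, ?_⟩
    · intro i
      fin_cases i
      · exact Stmt11Aux.psd_smul half_nonneg hPpsd
      · exact Stmt11Aux.psd_smul half_nonneg h1P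
    · rw [Matrix.trace_smul, Matrix.trace_one]
      simp only [Fintype.card_fin, smul_eq_mul]
      norm_num
    · rw [Fin.sum_univ_two]
      simp only [Matrix.cons_val_zero, Matrix.cons_val_one, Matrix.head_cons]
      rw [hone_kron, smul_sub]
      abel
  constructor
  · -- extreme → not product
    intro hext
    rw [mem_extremePoints] at hext
    rintro ⟨f, e, hfe⟩
    set F : Matrix (Fin 2) (Fin 2) ℂ := vecMulVec f (star f) with hF
    set E : Matrix (Fin 2) (Fin 2) ℂ := vecMulVec e (star e) with hE
    set cf : ℂ := star f ⬝ᵥ f with hcf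
    have hcf0 : (0:ℂ) ≤ cf := by
      rw [hcf]
      exact Finset.sum_nonneg fun i _ => star_mul_self_nonneg _
    have hcfe : cf * (star (e 0) * e 0 + star (e 1) * e 1) = 1 := by
      have hφ2 := hφ'
      rw [hfe] at hφ2
      simp only [dotProduct, Fintype.sum_prod_type, Fin.sum_univ_two, Pi.star_apply,
        star_mul'] at hφ2
      rw [hcf]
      simp only [dotProduct, Fin.sum_univ_two, Pi.star_apply]
      linear_combination hφ2
    have htrE : E.trace = star (e 0) * e 0 + star (e 1) * e 1 := by
      rw [hE]
      simp [Matrix.trace, Matrix.diag, vecMulVec_apply, Fin.sum_univ_two]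
      ring
    have hFE : F ⊗ₖ E = P := by
      rw [hF, hE, hPdef]
      ext ⟨i, j⟩ ⟨k, l⟩
      simp only [kroneckerMap_apply, vecMulVec_apply, Pi.star_apply, hfe, star_mul']
      ring
    set g : Fin 2 → ℂ := ![star (f 1), -star (f 0)] with hg
    have hcf' : cf = (starRingEnd ℂ) (f 0) * f 0 + (starRingEnd ℂ) (f 1) * f 1 := by
      rw [hcf]
      simp [dotProduct, Fin.sum_univ_two, Complex.star_def]
    have hFg : cf • (1 : Matrix (Fin 2) (Fin 2) ℂ) - F = vecMulVec g (star g) := by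
      ext i j
      fin_cases i <;> fin_cases j
      · show (cf • (1 : Matrix (Fin 2) (Fin 2) ℂ) - F) 0 0 = vecMulVec g (star g) 0 0
        simp [hF, hg, vecMulVec_apply, Matrix.one_apply, Complex.star_def]
        first
        | exact Or.inl (mul_comm _ _)
        | linear_combination hcf'
        | linear_combination -hcf'
        | ring
      · show (cf • (1 : Matrix (Fin 2) (Fin 2) ℂ) - F) 0 1 = vecMulVec g (star g) 0 1
        simp [hF, hg, vecMulVec_apply, Matrix.one_apply, Complex.star_def]
        first
        | exact Or.inl (mul_comm _ _)
        | linear_combination hcf'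
        | linear_combination -hcf'
        | ring
      · show (cf • (1 : Matrix (Fin 2) (Fin 2) ℂ) - F) 1 0 = vecMulVec g (star g) 1 0
        simp [hF, hg, vecMulVec_apply, Matrix.one_apply, Complex.star_def]
        first
        | exact Or.inl (mul_comm _ _)
        | linear_combination hcf'
        | linear_combination -hcf'
        | ring
      · show (cf • (1 : Matrix (Fin 2) (Fin 2) ℂ) - F) 1 1 = vecMulVec g (star g) 1 1
        simp [hF, hg, vecMulVec_apply, Matrix.one_apply, Complex.star_def]
        first
        | exact Or.inl (mul_comm _ _)
        | linear_combination hcf'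
        | linear_combination -hcf'
        | ring
    set k : Fin 2 → ℂ := ![star (e 1), -star (e 0)] with hk
    have hEk : (1 : Matrix (Fin 2) (Fin 2) ℂ) - cf • E = cf • vecMulVec k (star k) := by
      have hcfe' := hcfe
      simp only [Complex.star_def] at hcfe'
      ext i j
      fin_cases i <;> fin_cases j
      · show ((1 : Matrix (Fin 2) (Fin 2) ℂ) - cf • E) 0 0 = (cf • vecMulVec k (star k)) 0 0
        rw [Matrix.smul_apply]
        simp [hE, hk, vecMulVec_apply, Matrix.one_apply, Complex.star_def]
        first
        | exact Or.inl (mul_comm _ _)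
        | linear_combination hcfe'
        | linear_combination -hcfe'
        | ring
      · show ((1 : Matrix (Fin 2) (Fin 2) ℂ) - cf • E) 0 1 = (cf • vecMulVec k (star k)) 0 1
        rw [Matrix.smul_apply]
        simp [hE, hk, vecMulVec_apply, Matrix.one_apply, Complex.star_def]
        first
        | exact Or.inl (mul_comm _ _)
        | linear_combination hcfe'
        | linear_combination -hcfe'
        | ring
      · show ((1 : Matrix (Fin 2) (Fin 2) ℂ) - cf • E) 1 0 = (cf • vecMulVec k (star k)) 1 0
        rw [Matrix.smul_apply]
        simp [hE, hk, vecMulVec_apply, Matrix.one_apply, Complex.star_def]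
        first
        | exact Or.inl (mul_comm _ _)
        | linear_combination hcfe'
        | linear_combination -hcfe'
        | ring
      · show ((1 : Matrix (Fin 2) (Fin 2) ℂ) - cf • E) 1 1 = (cf • vecMulVec k (star k)) 1 1
        rw [Matrix.smul_apply]
        simp [hE, hk, vecMulVec_apply, Matrix.one_apply, Complex.star_def]
        first
        | exact Or.inl (mul_comm _ _)
        | linear_combination hcfe'
        | linear_combination -hcfe'
        | ring
    set A : Fin 2 → Matrix (Fin 2 × Fin 2) (Fin 2 × Fin 2) ℂ :=
      ![F ⊗ₖ E, (cf • 1 - F) ⊗ₖ E] with hAdef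
    set B : Fin 2 → Matrix (Fin 2 × Fin 2) (Fin 2 × Fin 2) ℂ :=
      ![(0 : Matrix (Fin 2 × Fin 2) (Fin 2 × Fin 2) ℂ),
        (1 : Matrix (Fin 2) (Fin 2) ℂ) ⊗ₖ
          ((1 : Matrix (Fin 2) (Fin 2) ℂ) - cf • E)] with hBdef
    have hAT : A ∈ {W | IsTester 2 2 2 W} := by
      refine ⟨?_, cf • E, Stmt11Aux.psd_smul hcf0 (Stmt11Aux.psd_vmv e), ?_, ?_⟩
      · intro i
        fin_cases i
        · exact Stmt11Aux.psd_kron (Stmt11Aux.psd_vmv f) (Stmt11Aux.psd_vmv e)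
        · show ((cf • 1 - F) ⊗ₖ E).PosSemidef
          rw [hFg]
          exact Stmt11Aux.psd_kron (Stmt11Aux.psd_vmv g) (Stmt11Aux.psd_vmv e)
      · rw [Matrix.trace_smul, htrE, smul_eq_mul, hcfe]
      · rw [Fin.sum_univ_two]
        show F ⊗ₖ E + (cf • 1 - F) ⊗ₖ E = _
        rw [← add_kronecker, add_sub_cancel, smul_kronecker, kronecker_smul]
    have hBT : B ∈ {W | IsTester 2 2 2 W} := by
      have h1mE : ((1 : Matrix (Fin 2) (Fin 2) ℂ) - cf • E).PosSemidef := by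
        rw [hEk]
        exact Stmt11Aux.psd_smul hcf0 (Stmt11Aux.psd_vmv k)
      refine ⟨?_, (1 : Matrix (Fin 2) (Fin 2) ℂ) - cf • E, h1mE, ?_, ?_⟩
      · intro i
        fin_cases i
        · exact Matrix.PosSemidef.zero
        · exact Stmt11Aux.psd_kron Matrix.PosSemidef.one h1mE
      · rw [Matrix.trace_sub, Matrix.trace_one, Matrix.trace_smul, htrE, smul_eq_mul, hcfe]
        norm_num
      · rw [Fin.sum_univ_two]
        show (0 : Matrix (Fin 2 × Fin 2) (Fin 2 × Fin 2) ℂ) + _ = _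
        rw [zero_add]
        rfl
    have hseg : ![(1/2 : ℂ) • P, (1/2 : ℂ) • (1 - P)] ∈ openSegment ℝ A B := by
      refine ⟨1/2, 1/2, by norm_num, by norm_num, by norm_num, ?_⟩
      funext i
      fin_cases i
      · show (1/2 : ℝ) • A 0 + (1/2 : ℝ) • B 0 = (1/2 : ℂ) • P
        show (1/2 : ℝ) • (F ⊗ₖ E) + (1/2 : ℝ) • (0 : Matrix _ _ ℂ) = (1/2 : ℂ) • P
        rw [smul_zero, add_zero, Stmt11Aux.rsmul, hFE]
        norm_num
      · show (1/2 : ℝ) • A 1 + (1/2 : ℝ) • B 1 = (1/2 : ℂ) • (1 - P)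
        show (1/2 : ℝ) • ((cf • 1 - F) ⊗ₖ E) + (1/2 : ℝ) •
          ((1 : Matrix (Fin 2) (Fin 2) ℂ) ⊗ₖ ((1 : Matrix (Fin 2) (Fin 2) ℂ) - cf • E))
          = (1/2 : ℂ) • (1 - P)
        rw [Stmt11Aux.rsmul, Stmt11Aux.rsmul, ← smul_add]
        have hcomb : (cf • 1 - F) ⊗ₖ E +
            (1 : Matrix (Fin 2) (Fin 2) ℂ) ⊗ₖ ((1 : Matrix (Fin 2) (Fin 2) ℂ) - cf • E)
            = 1 - P := by
          rw [Stmt11Aux.sub_kron, Stmt11Aux.kron_sub, smul_kronecker, kronecker_smul,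
            Matrix.one_kronecker_one, hFE]
          abel
        rw [hcomb]
        norm_num
    have hAx := (hext.2 A hAT B hBT hseg).1
    have hcontr := congrArg (fun W => Matrix.trace (W 0)) hAx
    simp only [hAdef, Matrix.cons_val_zero] at hcontr
    rw [hFE, Matrix.trace_smul, htrP, smul_eq_mul, mul_one] at hcontr
    norm_num at hcontr
  · -- not product → extreme
    intro hnp
    rw [mem_extremePoints]
    refine ⟨hxS, ?_⟩
    rintro A hA B hB ⟨s, t, hs, ht, hst, hseg⟩
    obtain ⟨hApsd, ρA, hρA, hρAtr, hρAsum⟩ := hA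
    obtain ⟨hBpsd, ρB, hρB, hρBtr, hρBsum⟩ := hB
    have hdet : φ (0,0) * φ (1,1) ≠ φ (0,1) * φ (1,0) := fun hd =>
      hnp ((Stmt11Aux.prod_iff_det φ).mpr hd)
    have hs0 : ((s : ℂ)) ≠ 0 := Complex.ofReal_ne_zero.mpr hs.ne'
    have ht0 : ((t : ℂ)) ≠ 0 := Complex.ofReal_ne_zero.mpr ht.ne'
    have hsC : (0:ℂ) ≤ (s : ℂ) := Complex.zero_le_real.mpr hs.le
    have htC : (0:ℂ) ≤ (t : ℂ) := Complex.zero_le_real.mpr ht.le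
    have E0 : (s : ℂ) • A 0 + (t : ℂ) • B 0 = (1/2 : ℂ) • P := by
      have h := congrFun hseg 0
      simp only [Pi.add_apply, Pi.smul_apply, Matrix.cons_val_zero] at h
      rwa [Stmt11Aux.rsmul, Stmt11Aux.rsmul] at h
    have E1 : (s : ℂ) • A 1 + (t : ℂ) • B 1 = (1/2 : ℂ) • (1 - P) := by
      have h := congrFun hseg 1
      simp only [Pi.add_apply, Pi.smul_apply, Matrix.cons_val_one, Matrix.head_cons] at h
      rwa [Stmt11Aux.rsmul, Stmt11Aux.rsmul] at h
    have h01A : A 0 + A 1 = (1 : Matrix (Fin 2) (Fin 2) ℂ) ⊗ₖ ρA := by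
      simpa [Fin.sum_univ_two] using hρAsum
    have h01B : B 0 + B 1 = (1 : Matrix (Fin 2) (Fin 2) ℂ) ⊗ₖ ρB := by
      simpa [Fin.sum_univ_two] using hρBsum
    have Esum : (s : ℂ) • ((1 : Matrix (Fin 2) (Fin 2) ℂ) ⊗ₖ ρA) +
        (t : ℂ) • ((1 : Matrix (Fin 2) (Fin 2) ℂ) ⊗ₖ ρB) = (1/2 : ℂ) • 1 := by
      rw [← h01A, ← h01B, smul_add, smul_add, add_add_add_comm, E0, E1, ← smul_add,
        add_sub_cancel]
    -- scalar equations
    set aA : ℂ := star φ ⬝ᵥ (A 0) *ᵥ φ with haA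
    set aB : ℂ := star φ ⬝ᵥ (B 0) *ᵥ φ with haB
    set mA : ℂ := star φ ⬝ᵥ (((1 : Matrix (Fin 2) (Fin 2) ℂ) ⊗ₖ ρA) *ᵥ φ) with hmA
    set mB : ℂ := star φ ⬝ᵥ (((1 : Matrix (Fin 2) (Fin 2) ℂ) ⊗ₖ ρB) *ᵥ φ) with hmB
    have S0 : (s : ℂ) * aA + (t : ℂ) * aB = 1/2 := by
      have h := congrArg (fun M : Matrix (Fin 2 × Fin 2) (Fin 2 × Fin 2) ℂ =>
        star φ ⬝ᵥ M *ᵥ φ) E0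
      simpa [add_mulVec, smul_mulVec, dotProduct_add, dotProduct_smul, smul_eq_mul,
        hPφ, hφ', haA, haB] using h
    have S1 : (s : ℂ) * mA + (t : ℂ) * mB = 1/2 := by
      have h := congrArg (fun M : Matrix (Fin 2 × Fin 2) (Fin 2 × Fin 2) ℂ =>
        star φ ⬝ᵥ M *ᵥ φ) Esum
      simpa [add_mulVec, smul_mulVec, dotProduct_add, dotProduct_smul, smul_eq_mul,
        Matrix.one_mulVec, hφ', hmA, hmB] using h
    have hgA : star φ ⬝ᵥ (A 1) *ᵥ φ = mA - aA := by
      have h1 : A 1 = (1 : Matrix (Fin 2) (Fin 2) ℂ) ⊗ₖ ρA - A 0 := eq_sub_of_add_eq' h01A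
      rw [h1, sub_mulVec, dotProduct_sub]
    have hgB : star φ ⬝ᵥ (B 1) *ᵥ φ = mB - aB := by
      have h1 : B 1 = (1 : Matrix (Fin 2) (Fin 2) ℂ) ⊗ₖ ρB - B 0 := eq_sub_of_add_eq' h01B
      rw [h1, sub_mulVec, dotProduct_sub]
    have hgA0 : (0:ℂ) ≤ mA - aA := hgA ▸ (hApsd 1).dotProduct_mulVec_nonneg φ
    have hgB0 : (0:ℂ) ≤ mB - aB := hgB ▸ (hBpsd 1).dotProduct_mulVec_nonneg φ
    have hzero : (s : ℂ) * (mA - aA) + (t : ℂ) * (mB - aB) = 0 := by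
      linear_combination S1 - S0
    have hsgA : (s : ℂ) * (mA - aA) = 0 := by
      have h1 : (0:ℂ) ≤ (s : ℂ) * (mA - aA) := mul_nonneg hsC hgA0
      have h2 : (0:ℂ) ≤ (t : ℂ) * (mB - aB) := mul_nonneg htC hgB0
      have h3 : (s : ℂ) * (mA - aA) ≤ 0 := by
        calc (s : ℂ) * (mA - aA) ≤ (s : ℂ) * (mA - aA) + (t : ℂ) * (mB - aB) :=
              le_add_of_nonneg_right h2
          _ = 0 := hzero
      exact le_antisymm h3 h1
    have htgB : (t : ℂ) * (mB - aB) = 0 := by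
      linear_combination hzero - hsgA
    have hmaA : mA - aA = 0 := (mul_eq_zero.mp hsgA).resolve_left hs0
    have hmaB : mB - aB = 0 := (mul_eq_zero.mp htgB).resolve_left ht0
    -- the per-tester conclusion
    have main : ∀ (C : Fin 2 → Matrix (Fin 2 × Fin 2) (Fin 2 × Fin 2) ℂ)
        (ρC : Matrix (Fin 2) (Fin 2) ℂ) (r : ℝ), ((r : ℂ)) ≠ 0 → (0:ℂ) ≤ (r : ℂ) →
        (∀ i, (C i).PosSemidef) → ρC.trace = 1 →
        C 0 + C 1 = (1 : Matrix (Fin 2) (Fin 2) ℂ) ⊗ₖ ρC →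
        ((1/2:ℂ) • P - (r : ℂ) • C 0).PosSemidef →
        star φ ⬝ᵥ (C 1) *ᵥ φ = 0 →
        C = ![(1/2 : ℂ) • P, (1/2 : ℂ) • (1 - P)] := by
      intro C ρC r hr0 hrC hCpsd hρCtr hCsum hdom hC1
      set aC : ℂ := star φ ⬝ᵥ (C 0) *ᵥ φ with haC
      have hC0dom := Stmt11Aux.rankOne_dominated hφ' (Stmt11Aux.psd_smul hrC (hCpsd 0)) hdom
      have hscal : star φ ⬝ᵥ ((r : ℂ) • C 0) *ᵥ φ = (r : ℂ) * aC := by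
        rw [smul_mulVec, dotProduct_smul, smul_eq_mul, haC]
      rw [hscal] at hC0dom
      have hC0 : C 0 = aC • P := by
        apply smul_right_injective (Matrix (Fin 2 × Fin 2) (Fin 2 × Fin 2) ℂ) hr0
        show (r : ℂ) • C 0 = (r : ℂ) • (aC • P)
        rw [hC0dom, smul_smul]
      have hC1eq : C 1 = (1 : Matrix (Fin 2) (Fin 2) ℂ) ⊗ₖ ρC - C 0 :=
        eq_sub_of_add_eq' hCsum
      have hρφ : ((1 : Matrix (Fin 2) (Fin 2) ℂ) ⊗ₖ ρC) *ᵥ φ = aC • φ := by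
        have h := (hCpsd 1).dotProduct_mulVec_zero_iff φ |>.mp hC1
        rw [hC1eq, sub_mulVec, hC0, smul_mulVec, hPφ, sub_eq_zero] at h
        exact h
      have hρC : ρC = aC • 1 := Stmt11Aux.eigen_rho φ hdet ρC aC hρφ
      have haChalf : aC = 1/2 := by
        rw [hρC, Matrix.trace_smul, Matrix.trace_one] at hρCtr
        simp only [Fintype.card_fin, smul_eq_mul] at hρCtr
        linear_combination hρCtr / 2
      funext i
      fin_cases i
      · show C 0 = (1/2 : ℂ) • P
        rw [hC0, haChalf]
      · show C 1 = (1/2 : ℂ) • (1 - P)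
        rw [hC1eq, hC0, hρC, haChalf, hone_kron, smul_sub]
    have hdomA : ((1/2:ℂ) • P - (s : ℂ) • A 0).PosSemidef := by
      rw [← E0, add_sub_cancel_left]
      exact Stmt11Aux.psd_smul htC (hBpsd 0)
    have hdomB : ((1/2:ℂ) • P - (t : ℂ) • B 0).PosSemidef := by
      rw [← E0, add_sub_cancel_right]
      exact Stmt11Aux.psd_smul hsC (hApsd 0)
    constructor
    · exact main A ρA s hs0 hsC hApsd hρAtr h01A hdomA (by rw [hgA, hmaA])
    · exact main B ρB t ht0 htC hBpsd hρBtr h01B hdomB (by rw [hgB, hmaB])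
end
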